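/- arXiv:1306.1931 — 2 statements merged into one kernel-verified Lean document; each statement's English description precedes it below -/
import Mathlib

section
/- For a multichain M = (A₁ ⊆ ⋯ ⊆ A_k) in Bₙ and i ∈ [n-1], with σ = σ(M) and α = α(M): p_i(M) > p_{i+1}(M) if and only if i ∈ D(σ⁻¹); p_i(M) = p_{i+1}(M) if and only if i ∉ D(σ⁻¹) and D(sᵢσ) ⊄ D(α); and p_i(M) < p_{i+1}(M) if and only if i ∉ D(σ⁻¹) and D(sᵢσ) ⊆ D(α). -/
noncomputable section
open scoped Classical

/-- The extension of a length-`k` multichain `A₁ ⊆ ⋯ ⊆ A_k` in `Bₙ` by `A_{k+1} = [n]`. -/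
def extChain {n k : ℕ} (M : Fin k → Finset (Fin n)) (j : Fin (k + 1)) : Finset (Fin n) :=
  if h : (j : ℕ) < k then M ⟨j, h⟩ else Finset.univ

/-- `p_i(M) = min {j ∈ [k+1] : i ∈ A_j}`, the first position at which `i` appears. -/
def firstPos {n k : ℕ} (M : Fin k → Finset (Fin n)) (i : Fin n) : Fin (k + 1) :=
  (Finset.univ.filter (fun j : Fin (k + 1) => i ∈ extChain M j)).min'
    ⟨Fin.last k, by
      rw [Finset.mem_filter]
      refine ⟨Finset.mem_univ _, ?_⟩
      unfold extChain
      rw [dif_neg (by simp)]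
      exact Finset.mem_univ _⟩

/-- The descent set `D(w) = {i ∈ [n-1] : w(i) > w(i+1)}` of a permutation,
with 1-based positions. -/
def DpermF {n : ℕ} (w : Equiv.Perm (Fin n)) : Finset ℕ :=
  Finset.image (fun j : Fin n => (j : ℕ) + 1)
    (Finset.univ.filter (fun j : Fin n =>
      ∃ h : (j : ℕ) + 1 < n, w ⟨(j : ℕ) + 1, h⟩ < w j))

/-- The number of inversions of `w`, which equals its Coxeter length. -/
def invCount {n : ℕ} (w : Equiv.Perm (Fin n)) : ℕ :=
  (Finset.univ.filter (fun p : Fin n × Fin n => p.1 < p.2 ∧ w p.2 < w p.1)).card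

/-! ### Auxiliary lemmas -/

/-- Adjacent-value swap preserves order except on the pair itself. -/
lemma adjSwap_lt {n : ℕ} (a b : Fin n) (hab : (b : ℕ) = (a : ℕ) + 1)
    (v w : Fin n) (h1 : ¬(v = a ∧ w = b)) (h2 : ¬(v = b ∧ w = a)) :
    (Equiv.swap a b v < Equiv.swap a b w ↔ v < w) := by
  simp only [Equiv.swap_apply_def]
  split_ifs <;> simp only [Fin.lt_def, Fin.ext_iff, not_and] at * <;> omega

/-- Adjacent-position swap preserves order except on the pair itself. -/
lemma swap_pos_lt {n : ℕ} (x x' p q : Fin n) (hxx' : (x' : ℕ) = (x : ℕ) + 1)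
    (hpq : p < q) (hne : ¬(p = x ∧ q = x')) :
    Equiv.swap x x' p < Equiv.swap x x' q := by
  simp only [Equiv.swap_apply_def]
  split_ifs <;> simp only [Fin.lt_def, Fin.ext_iff, not_and] at * <;> omega

lemma image_swap_self {n : ℕ} (S : Finset (Fin n)) (a b : Fin n)
    (h : a ∈ S ↔ b ∈ S) : S.image (Equiv.swap a b) = S := by
  apply Finset.eq_of_subset_of_card_le
  · intro x hx
    simp only [Finset.mem_image] at hx
    obtain ⟨y, hy, rfl⟩ := hx
    rcases eq_or_ne y a with rfl | ha
    · rw [Equiv.swap_apply_left]; exact h.mp hy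
    rcases eq_or_ne y b with rfl | hb
    · rw [Equiv.swap_apply_right]; exact h.mpr hy
    · rwa [Equiv.swap_apply_of_ne_of_ne ha hb]
  · rw [Finset.card_image_of_injective _ (Equiv.injective _)]

/-- Swapping two adjacent values which form an inversion decreases `invCount`. -/
lemma invCount_swap_values_lt {n : ℕ} (σ : Equiv.Perm (Fin n)) (a b : Fin n)
    (hab : (b : ℕ) = (a : ℕ) + 1) (hd : σ⁻¹ b < σ⁻¹ a) :
    invCount (Equiv.swap a b * σ) < invCount σ := by
  set d' := σ⁻¹ b with hd'
  set c' := σ⁻¹ a with hc'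
  have hσc : σ c' = a := σ.apply_symm_apply a
  have hσd : σ d' = b := σ.apply_symm_apply b
  have key : (Finset.univ.filter (fun p : Fin n × Fin n =>
      p.1 < p.2 ∧ (Equiv.swap a b * σ) p.2 < (Equiv.swap a b * σ) p.1)) =
      (Finset.univ.filter (fun p : Fin n × Fin n => p.1 < p.2 ∧ σ p.2 < σ p.1)).erase (d', c') := by
    ext ⟨p, q⟩
    simp only [Finset.mem_filter, Finset.mem_erase, Finset.mem_univ, true_and]
    simp only [Equiv.Perm.mul_apply, Prod.mk.injEq, ne_eq, not_and]
    constructor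
    · rintro ⟨hpq, hlt⟩
      have hne : ¬(p = d' ∧ q = c') := by
        rintro ⟨rfl, rfl⟩
        rw [hσc, hσd, Equiv.swap_apply_left, Equiv.swap_apply_right] at hlt
        exact absurd hab (by omega)
      refine ⟨fun h1 h2 => hne ⟨h1, h2⟩, hpq, ?_⟩
      rw [adjSwap_lt a b hab (σ q) (σ p) ?_ ?_] at hlt
      · exact hlt
      · rintro ⟨h1, h2⟩
        exact hne ⟨σ.injective (h2.trans hσd.symm), σ.injective (h1.trans hσc.symm)⟩
      · rintro ⟨h1, h2⟩
        have : p = c' := σ.injective (h2.trans hσc.symm)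
        have : q = d' := σ.injective (h1.trans hσd.symm)
        subst_vars; exact absurd hpq (not_lt.mpr hd.le)
    · rintro ⟨hne, hpq, hlt⟩
      refine ⟨hpq, ?_⟩
      rw [adjSwap_lt a b hab (σ q) (σ p) ?_ ?_]
      · exact hlt
      · rintro ⟨h1, h2⟩
        exact hne (σ.injective (h2.trans hσd.symm)) (σ.injective (h1.trans hσc.symm))
      · rintro ⟨h1, h2⟩
        have hp : p = c' := σ.injective (h2.trans hσc.symm)
        have hq : q = d' := σ.injective (h1.trans hσd.symm)
        subst_vars; exact absurd hpq (not_lt.mpr hd.le)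
  have hmem : (d', c') ∈ (Finset.univ.filter (fun p : Fin n × Fin n => p.1 < p.2 ∧ σ p.2 < σ p.1)) := by
    simp only [Finset.mem_filter, Finset.mem_univ, true_and]
    refine ⟨hd, ?_⟩
    rw [hσc, hσd]
    exact Fin.lt_def.mpr (by omega)
  unfold invCount
  rw [key, Finset.card_erase_of_mem hmem]
  have : 0 < (Finset.univ.filter (fun p : Fin n × Fin n => p.1 < p.2 ∧ σ p.2 < σ p.1)).card :=
    Finset.card_pos.mpr ⟨_, hmem⟩
  omega

/-- Multiplying on the right by an adjacent transposition at a descent decreases `invCount`. -/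
lemma invCount_swap_pos_lt {n : ℕ} (σ : Equiv.Perm (Fin n)) (x x' : Fin n)
    (hxx' : (x' : ℕ) = (x : ℕ) + 1) (hdesc : σ x' < σ x) :
    invCount (σ * Equiv.swap x x') < invCount σ := by
  set π := Equiv.swap x x' with hπ
  set Iσ := Finset.univ.filter (fun p : Fin n × Fin n => p.1 < p.2 ∧ σ p.2 < σ p.1) with hIσ
  set Iτ := Finset.univ.filter (fun p : Fin n × Fin n => p.1 < p.2 ∧ (σ * π) p.2 < (σ * π) p.1) with hIτ
  have hmem : (x, x') ∈ Iσ := by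
    simp only [hIσ, Finset.mem_filter, Finset.mem_univ, true_and]
    exact ⟨Fin.lt_def.mpr (by omega), hdesc⟩
  have hle : Iτ.card ≤ (Iσ.erase (x, x')).card := by
    apply Finset.card_le_card_of_injOn (fun p => (π p.1, π p.2))
    · rintro ⟨p, q⟩ hpq
      rw [Finset.mem_coe, hIτ, Finset.mem_filter] at hpq
      simp only [Finset.mem_univ, true_and] at hpq
      simp only [Equiv.Perm.mul_apply] at hpq
      obtain ⟨h1, h2⟩ := hpq
      have hne : ¬(p = x ∧ q = x') := by
        rintro ⟨rfl, rfl⟩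
        rw [hπ, Equiv.swap_apply_left, Equiv.swap_apply_right] at h2
        exact absurd h2 (not_lt.mpr hdesc.le)
      have hplt : π p < π q := swap_pos_lt x x' p q hxx' h1 hne
      simp only [Finset.mem_coe, Finset.mem_erase, hIσ, Finset.mem_filter, Finset.mem_univ, true_and,
        ne_eq, Prod.mk.injEq, not_and]
      refine ⟨?_, hplt, h2⟩
      intro hpx hqx
      have hp : p = x' := by
        have := congrArg π hpx
        rwa [hπ, Equiv.swap_apply_self, Equiv.swap_apply_left] at this
      have hq : q = x := by
        have := congrArg π hqx
        rwa [hπ, Equiv.swap_apply_self, Equiv.swap_apply_right] at this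
      subst hp; subst hq
      exact absurd h1 (not_lt.mpr (Fin.le_def.mpr (by omega)))
    · rintro ⟨p, q⟩ _ ⟨p', q'⟩ _ h
      simp only [Prod.mk.injEq] at h
      exact Prod.ext (π.injective h.1) (π.injective h.2)
  have : (Iσ.erase (x, x')).card < Iσ.card := Finset.card_erase_lt_of_mem hmem
  calc invCount (σ * π) = Iτ.card := rfl
    _ ≤ _ := hle
    _ < Iσ.card := this

lemma extChain_mono {n k : ℕ} {M : Fin k → Finset (Fin n)} (hM : Monotone M)
    {j₁ j₂ : Fin (k+1)} (h : j₁ ≤ j₂) : extChain M j₁ ⊆ extChain M j₂ := by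
  unfold extChain
  split_ifs with h1 h2 h2
  · exact hM (by exact (Fin.le_def.mp h))
  · exact Finset.subset_univ _
  · omega
  · exact Finset.subset_univ _

lemma mem_extChain_firstPos {n k : ℕ} (M : Fin k → Finset (Fin n)) (i : Fin n) :
    i ∈ extChain M (firstPos M i) := by
  have := Finset.min'_mem (Finset.univ.filter (fun j : Fin (k + 1) => i ∈ extChain M j))
    ⟨Fin.last k, by
      rw [Finset.mem_filter]
      refine ⟨Finset.mem_univ _, ?_⟩
      unfold extChain
      rw [dif_neg (by simp)]
      exact Finset.mem_univ _⟩
  exact (Finset.mem_filter.mp this).2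

lemma firstPos_le {n k : ℕ} (M : Fin k → Finset (Fin n)) (i : Fin n) (t : Fin (k+1))
    (h : i ∈ extChain M t) : firstPos M i ≤ t := by
  apply Finset.min'_le
  simpa using h

lemma mem_M_iff {n k : ℕ} (M : Fin k → Finset (Fin n)) (σ : Equiv.Perm (Fin n))
    (hstd : ∀ j : Fin k,
      Finset.image σ (Finset.univ.filter fun x : Fin n => (x : ℕ) < (M j).card) = M j)
    (j' : Fin k) (i : Fin n) : i ∈ M j' ↔ ((σ⁻¹ i : Fin n) : ℕ) < (M j').card := by
  conv_lhs => rw [← hstd j']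
  simp only [Finset.mem_image, Finset.mem_filter, Finset.mem_univ, true_and]
  constructor
  · rintro ⟨x, hx, rfl⟩
    rwa [Equiv.Perm.coe_inv, Equiv.symm_apply_apply]
  · intro h
    exact ⟨σ⁻¹ i, h, σ.apply_symm_apply i⟩

lemma firstPos_lt_iff {n k : ℕ} (M : Fin k → Finset (Fin n)) (hM : Monotone M)
    (σ : Equiv.Perm (Fin n))
    (hstd : ∀ j : Fin k,
      Finset.image σ (Finset.univ.filter fun x : Fin n => (x : ℕ) < (M j).card) = M j)
    (u v : Fin n) :
    firstPos M v < firstPos M u ↔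
      ∃ j' : Fin k, ((σ⁻¹ v : Fin n) : ℕ) < (M j').card ∧ (M j').card ≤ ((σ⁻¹ u : Fin n) : ℕ) := by
  constructor
  · intro h
    have hu : u ∉ extChain M (firstPos M v) := by
      intro hmem
      exact absurd (firstPos_le M u _ hmem) (not_le.mpr h)
    have hv : v ∈ extChain M (firstPos M v) := mem_extChain_firstPos M v
    have hlt : ((firstPos M v : Fin (k+1)) : ℕ) < k := by
      by_contra hk
      simp [extChain, hk] at hu
    refine ⟨⟨firstPos M v, hlt⟩, ?_, ?_⟩
    · rw [← mem_M_iff M σ hstd]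
      simpa [extChain, hlt] using hv
    · rw [← not_lt, ← mem_M_iff M σ hstd]
      intro hc
      exact hu (by simpa [extChain, hlt] using hc)
  · rintro ⟨j', h1, h2⟩
    have hjk : (j' : ℕ) < k + 1 := by omega
    set t : Fin (k+1) := ⟨j', hjk⟩ with ht
    have hvt : v ∈ extChain M t := by
      simp only [extChain, ht, j'.isLt, dif_pos]
      rw [mem_M_iff M σ hstd]
      convert h1 using 2
    have hut : u ∉ extChain M t := by
      simp only [extChain, ht, j'.isLt, dif_pos]
      rw [mem_M_iff M σ hstd]
      convert not_lt.mpr h2 using 2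
    have h1' : firstPos M v ≤ t := firstPos_le M v t hvt
    have h2' : t < firstPos M u := by
      by_contra hc
      push_neg at hc
      exact hut (extChain_mono hM hc (mem_extChain_firstPos M u))
    exact lt_of_le_of_lt h1' h2'

lemma exists_descent {n : ℕ} (σ : Equiv.Perm (Fin n)) (c d : ℕ) (hdn : d < n)
    (hcd : c + 1 < d)
    (hval : ((σ ⟨c, by omega⟩ : Fin n) : ℕ) + 1 = ((σ ⟨d, hdn⟩ : Fin n) : ℕ)) :
    ∃ x, ∃ _ : c ≤ x, ∃ h2 : x + 1 ≤ d,
      σ ⟨x + 1, lt_of_le_of_lt h2 hdn⟩ < σ ⟨x, by omega⟩ := by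
  by_contra hno
  push_neg at hno
  have key : ∀ i, (hm : c + i ≤ d) → ((σ ⟨c, by omega⟩ : Fin n) : ℕ) + i ≤ ((σ ⟨c + i, by omega⟩ : Fin n) : ℕ) := by
    intro i
    induction i with
    | zero => intro hm; simp
    | succ i ih =>
      intro hm
      have h1 : c + i ≤ d := by omega
      have h2 : (c + i) + 1 ≤ d := by omega
      have hstep := hno (c + i) (by omega) h2
      have hne : σ (⟨(c+i)+1, lt_of_le_of_lt h2 hdn⟩ : Fin n) ≠ σ ⟨c+i, by omega⟩ := by
        intro h
        have := σ.injective h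
        simp only [Fin.ext_iff] at this
        omega
      have hlt : ((σ ⟨c+i, by omega⟩ : Fin n) : ℕ) < ((σ ⟨(c+i)+1, lt_of_le_of_lt h2 hdn⟩ : Fin n) : ℕ) := by
        have := Fin.lt_def.mp (lt_of_le_of_ne hstep hne.symm)
        omega
      have := ih h1
      show ((σ ⟨c, by omega⟩ : Fin n) : ℕ) + (i+1) ≤ ((σ ⟨(c+i)+1, lt_of_le_of_lt h2 hdn⟩ : Fin n) : ℕ)
      omega
  have := key (d - c) (by omega)
  have he : c + (d - c) = d := by omega
  rw [show (⟨c + (d-c), by omega⟩ : Fin n) = ⟨d, hdn⟩ from Fin.ext he] at this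
  omega

lemma mem_DpermF_iff {n : ℕ} (w : Equiv.Perm (Fin n)) (x : ℕ) (hx : x + 1 < n) :
    (x + 1) ∈ DpermF w ↔ w ⟨x + 1, hx⟩ < w ⟨x, by omega⟩ := by
  simp only [DpermF, Finset.mem_image, Finset.mem_filter, Finset.mem_univ, true_and]
  constructor
  · rintro ⟨j₀, ⟨h, hlt⟩, head⟩
    have hv : (j₀ : ℕ) = x := by omega
    have e1 : (⟨x + 1, hx⟩ : Fin n) = ⟨(j₀ : ℕ) + 1, h⟩ := by
      apply Fin.ext; simp [hv]
    have e2 : (⟨x, by omega⟩ : Fin n) = j₀ := by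
      apply Fin.ext; simp [hv]
    rw [e1, e2]
    exact hlt
  · intro h
    exact ⟨⟨x, by omega⟩, ⟨hx, h⟩, rfl⟩

/-- Every (1-based) descent of a minimal `σ` is a cardinality of the chain. -/
lemma descent_card {n k : ℕ} (M : Fin k → Finset (Fin n)) (σ : Equiv.Perm (Fin n))
    (hstd : ∀ j : Fin k,
      Finset.image σ (Finset.univ.filter fun x : Fin n => (x : ℕ) < (M j).card) = M j)
    (hmin : ∀ τ : Equiv.Perm (Fin n),
      (∀ j : Fin k,
        Finset.image τ (Finset.univ.filter fun x : Fin n => (x : ℕ) < (M j).card) = M j) →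
      invCount σ ≤ invCount τ)
    (x : ℕ) (hx : x + 1 < n)
    (hdesc : σ ⟨x + 1, hx⟩ < σ ⟨x, by omega⟩) :
    ∃ j' : Fin k, x + 1 = (M j').card := by
  by_contra hno
  push_neg at hno
  set x0 : Fin n := ⟨x, by omega⟩ with hx0
  set x1 : Fin n := ⟨x + 1, hx⟩ with hx1
  have hτstd : ∀ j' : Fin k,
      Finset.image (σ * Equiv.swap x0 x1)
        (Finset.univ.filter fun y : Fin n => (y : ℕ) < (M j').card) = M j' := by
    intro j'
    have hmemiff : x0 ∈ (Finset.univ.filter fun y : Fin n => (y : ℕ) < (M j').card) ↔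
        x1 ∈ (Finset.univ.filter fun y : Fin n => (y : ℕ) < (M j').card) := by
      simp only [Finset.mem_filter, Finset.mem_univ, true_and, hx0, hx1]
      have := hno j'
      omega
    have himg : (Finset.univ.filter fun y : Fin n => (y : ℕ) < (M j').card).image
        (Equiv.swap x0 x1) = (Finset.univ.filter fun y : Fin n => (y : ℕ) < (M j').card) :=
      image_swap_self _ _ _ hmemiff
    have hcomp : Finset.image (⇑(σ * Equiv.swap x0 x1))
        (Finset.univ.filter fun y : Fin n => (y : ℕ) < (M j').card) =
        ((Finset.univ.filter fun y : Fin n => (y : ℕ) < (M j').card).image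
          (Equiv.swap x0 x1)).image σ := by
      rw [Finset.image_image, Equiv.Perm.coe_mul]
    rw [hcomp, himg, hstd j']
  exact absurd (hmin _ hτstd) (not_le.mpr (invCount_swap_pos_lt σ x0 x1 rfl hdesc))

/-- Minimality exchange: a descent of `σ⁻¹` at adjacent values forces a chain
cardinality strictly between the two positions. -/
lemma exchange_card {n k : ℕ} (M : Fin k → Finset (Fin n)) (σ : Equiv.Perm (Fin n))
    (hstd : ∀ j : Fin k,
      Finset.image σ (Finset.univ.filter fun x : Fin n => (x : ℕ) < (M j).card) = M j)
    (hmin : ∀ τ : Equiv.Perm (Fin n),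
      (∀ j : Fin k,
        Finset.image τ (Finset.univ.filter fun x : Fin n => (x : ℕ) < (M j).card) = M j) →
      invCount σ ≤ invCount τ)
    (a b : Fin n) (hab : (b : ℕ) = (a : ℕ) + 1) (hd : σ⁻¹ b < σ⁻¹ a) :
    ∃ j' : Fin k, ((σ⁻¹ b : Fin n) : ℕ) < (M j').card ∧ (M j').card ≤ ((σ⁻¹ a : Fin n) : ℕ) := by
  by_contra hno
  push_neg at hno
  have hτstd : ∀ j' : Fin k,
      Finset.image (Equiv.swap a b * σ)
        (Finset.univ.filter fun y : Fin n => (y : ℕ) < (M j').card) = M j' := by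
    intro j'
    have hmemiff : a ∈ M j' ↔ b ∈ M j' := by
      rw [mem_M_iff M σ hstd, mem_M_iff M σ hstd]
      have hdval := Fin.lt_def.mp hd
      constructor
      · intro h
        have := hno j'
        omega
      · intro h
        exact hno j' h
    have hcomp : Finset.image (⇑(Equiv.swap a b * σ))
        (Finset.univ.filter fun y : Fin n => (y : ℕ) < (M j').card) =
        ((Finset.univ.filter fun y : Fin n => (y : ℕ) < (M j').card).image σ).image
          (Equiv.swap a b) := by
      rw [Finset.image_image, Equiv.Perm.coe_mul]
    rw [hcomp, hstd j', image_swap_self _ _ _ hmemiff]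
  exact absurd (hmin _ hτstd) (not_le.mpr (invCount_swap_values_lt σ a b hab hd))
set_option maxHeartbeats 1000000 in
/-- Let `M` be a multichain in `Bₙ`, `σ = σ(M)` the minimal-length permutation sending
the standard multichain to `M`, and `D(α(M)) = {|A₁|,…,|A_k|}` the descent multiset of
`α(M)`.  For `i ∈ [n-1]` (written `i = j+1` with 0-based `j`):
`p_i(M) > p_{i+1}(M)` iff `i ∈ D(σ⁻¹)`;
`p_i(M) = p_{i+1}(M)` iff `i ∉ D(σ⁻¹)` and `D(sᵢσ) ⊄ D(α(M))`;
`p_i(M) < p_{i+1}(M)` iff `i ∉ D(σ⁻¹)` and `D(sᵢσ) ⊆ D(α(M))`. -/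
theorem stmt_18 (n k : ℕ) (M : Fin k → Finset (Fin n)) (hM : Monotone M)
    (σ : Equiv.Perm (Fin n))
    (hstd : ∀ j : Fin k,
      Finset.image σ
        (Finset.univ.filter fun x : Fin n => (x : ℕ) < (M j).card) = M j)
    (hmin : ∀ τ : Equiv.Perm (Fin n),
      (∀ j : Fin k,
        Finset.image τ
          (Finset.univ.filter fun x : Fin n => (x : ℕ) < (M j).card) = M j) →
      invCount σ ≤ invCount τ)
    (j : ℕ) (hj : j + 1 < n) :
    (firstPos M ⟨j, Nat.lt_of_succ_lt hj⟩ > firstPos M ⟨j + 1, hj⟩ ↔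
      (j + 1) ∈ DpermF σ⁻¹) ∧
    (firstPos M ⟨j, Nat.lt_of_succ_lt hj⟩ = firstPos M ⟨j + 1, hj⟩ ↔
      ((j + 1) ∉ DpermF σ⁻¹ ∧
        ¬(↑(DpermF (Equiv.swap ⟨j, Nat.lt_of_succ_lt hj⟩ ⟨j + 1, hj⟩ * σ)) ⊆
          {c : ℕ | ∃ j' : Fin k, c = (M j').card}))) ∧
    (firstPos M ⟨j, Nat.lt_of_succ_lt hj⟩ < firstPos M ⟨j + 1, hj⟩ ↔
      ((j + 1) ∉ DpermF σ⁻¹ ∧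
        ↑(DpermF (Equiv.swap ⟨j, Nat.lt_of_succ_lt hj⟩ ⟨j + 1, hj⟩ * σ)) ⊆
          {c : ℕ | ∃ j' : Fin k, c = (M j').card})) := by
  set a : Fin n := ⟨j, Nat.lt_of_succ_lt hj⟩ with ha
  set b : Fin n := ⟨j + 1, hj⟩ with hb
  have hab : (b : ℕ) = (a : ℕ) + 1 := rfl
  have habne : a ≠ b := by simp [ha, hb, Fin.ext_iff]
  have hinvne : σ⁻¹ a ≠ σ⁻¹ b := fun h => habne ((σ⁻¹).injective h)
  have P1 := firstPos_lt_iff M hM σ hstd a b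
  have P2 := firstPos_lt_iff M hM σ hstd b a
  have hD : ((j + 1) ∈ DpermF σ⁻¹ ↔ σ⁻¹ b < σ⁻¹ a) := mem_DpermF_iff σ⁻¹ j hj
  have part1 : firstPos M b < firstPos M a ↔ (j + 1) ∈ DpermF σ⁻¹ := by
    rw [P1]
    constructor
    · rintro ⟨j', h1, h2⟩
      apply hD.mpr
      rw [Fin.lt_def]
      omega
    · intro hmem
      exact exchange_card M σ hstd hmin a b hab (hD.mp hmem)
  have hdn : ((σ⁻¹ b : Fin n) : ℕ) < n := (σ⁻¹ b).isLt
  have hEiff : σ⁻¹ a < σ⁻¹ b →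
      ((∃ j' : Fin k, ((σ⁻¹ a : Fin n) : ℕ) < (M j').card ∧
          (M j').card ≤ ((σ⁻¹ b : Fin n) : ℕ)) ↔
        (↑(DpermF (Equiv.swap a b * σ)) : Set ℕ) ⊆
          {c : ℕ | ∃ j' : Fin k, c = (M j').card}) := by
    intro hcd
    have hcdv : ((σ⁻¹ a : Fin n) : ℕ) < ((σ⁻¹ b : Fin n) : ℕ) := Fin.lt_def.mp hcd
    have hσa : σ (σ⁻¹ a) = a := σ.apply_symm_apply a
    have hσb : σ (σ⁻¹ b) = b := σ.apply_symm_apply b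
    constructor
    · rintro ⟨j₀, hj₀1, hj₀2⟩ m hm
      rw [Finset.mem_coe] at hm
      simp only [DpermF, Finset.mem_image, Finset.mem_filter, Finset.mem_univ, true_and] at hm
      obtain ⟨x, ⟨hxn, hlt⟩, rfl⟩ := hm
      simp only [Equiv.Perm.mul_apply] at hlt
      by_cases hflip : σ (⟨(x : ℕ) + 1, hxn⟩ : Fin n) = b ∧ σ x = a
      · have e1 : σ⁻¹ b = (⟨(x : ℕ) + 1, hxn⟩ : Fin n) := by
          rw [← hflip.1, Equiv.Perm.coe_inv, Equiv.symm_apply_apply]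
        have e2 : σ⁻¹ a = x := by rw [← hflip.2, Equiv.Perm.coe_inv, Equiv.symm_apply_apply]
        have hd1 : ((σ⁻¹ b : Fin n) : ℕ) = (x : ℕ) + 1 := by rw [e1]
        have hc1 : ((σ⁻¹ a : Fin n) : ℕ) = (x : ℕ) := by rw [e2]
        refine ⟨j₀, ?_⟩
        omega
      · have hex1 : ¬(σ (⟨(x : ℕ) + 1, hxn⟩ : Fin n) = a ∧ σ x = b) := by
          rintro ⟨e1, e2⟩
          have hc1 : ((σ⁻¹ a : Fin n) : ℕ) = (x : ℕ) + 1 := by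
            rw [← e1, Equiv.Perm.coe_inv, Equiv.symm_apply_apply]
          have hd1 : ((σ⁻¹ b : Fin n) : ℕ) = (x : ℕ) := by
            rw [← e2, Equiv.Perm.coe_inv, Equiv.symm_apply_apply]
          omega
        have hσdesc : σ (⟨(x : ℕ) + 1, hxn⟩ : Fin n) < σ x :=
          (adjSwap_lt a b hab _ _ hex1 hflip).mp hlt
        obtain ⟨j', hj'⟩ := descent_card M σ hstd hmin (x : ℕ) hxn hσdesc
        exact ⟨j', hj'⟩
    · intro hsub
      by_cases hadj : ((σ⁻¹ b : Fin n) : ℕ) = ((σ⁻¹ a : Fin n) : ℕ) + 1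
      · have hcn : ((σ⁻¹ a : Fin n) : ℕ) + 1 < n := by omega
        have hmem : (((σ⁻¹ a : Fin n) : ℕ) + 1) ∈ DpermF (Equiv.swap a b * σ) := by
          rw [mem_DpermF_iff _ _ hcn]
          have e1 : (⟨((σ⁻¹ a : Fin n) : ℕ) + 1, hcn⟩ : Fin n) = σ⁻¹ b :=
            Fin.ext (by show ((σ⁻¹ a : Fin n) : ℕ) + 1 = ((σ⁻¹ b : Fin n) : ℕ); omega)
          have e2 : (⟨((σ⁻¹ a : Fin n) : ℕ), by omega⟩ : Fin n) = σ⁻¹ a :=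
            Fin.ext rfl
          rw [e1, e2]
          simp only [Equiv.Perm.mul_apply, hσa, hσb, Equiv.swap_apply_left,
            Equiv.swap_apply_right]
          exact Fin.lt_def.mpr (by omega)
        obtain ⟨j', he⟩ := hsub (Finset.mem_coe.mpr hmem)
        exact ⟨j', by omega, by omega⟩
      · have hcd2 : ((σ⁻¹ a : Fin n) : ℕ) + 1 < ((σ⁻¹ b : Fin n) : ℕ) := by omega
        have hval : ((σ (⟨((σ⁻¹ a : Fin n) : ℕ), by omega⟩ : Fin n) : Fin n) : ℕ) + 1 =
            ((σ (⟨((σ⁻¹ b : Fin n) : ℕ), hdn⟩ : Fin n) : Fin n) : ℕ) := by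
          have e1 : (⟨((σ⁻¹ a : Fin n) : ℕ), by omega⟩ : Fin n) = σ⁻¹ a := Fin.ext rfl
          have e2 : (⟨((σ⁻¹ b : Fin n) : ℕ), hdn⟩ : Fin n) = σ⁻¹ b := Fin.ext rfl
          rw [e1, e2, hσa, hσb]
        obtain ⟨x, hx1, hx2, hdesc⟩ :=
          exists_descent σ ((σ⁻¹ a : Fin n) : ℕ) ((σ⁻¹ b : Fin n) : ℕ) hdn hcd2 hval
        have hxn : x + 1 < n := by omega
        have hmem : (x + 1) ∈ DpermF (Equiv.swap a b * σ) := by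
          rw [mem_DpermF_iff _ _ hxn]
          simp only [Equiv.Perm.mul_apply]
          rw [adjSwap_lt a b hab _ _ ?_ ?_]
          · exact hdesc
          · rintro ⟨e1, e2⟩
            have hc1 : ((σ⁻¹ a : Fin n) : ℕ) = x + 1 := by
              rw [← e1, Equiv.Perm.coe_inv, Equiv.symm_apply_apply]
            omega
          · rintro ⟨e1, e2⟩
            have hd1 : ((σ⁻¹ b : Fin n) : ℕ) = x + 1 := by
              rw [← e1, Equiv.Perm.coe_inv, Equiv.symm_apply_apply]
            have hc1 : ((σ⁻¹ a : Fin n) : ℕ) = x := by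
              rw [← e2, Equiv.Perm.coe_inv, Equiv.symm_apply_apply]
            omega
        obtain ⟨j', he⟩ := hsub (Finset.mem_coe.mpr hmem)
        exact ⟨j', by omega, by omega⟩
  have part3 : firstPos M a < firstPos M b ↔
      ((j + 1) ∉ DpermF σ⁻¹ ∧
        (↑(DpermF (Equiv.swap a b * σ)) : Set ℕ) ⊆
          {c : ℕ | ∃ j' : Fin k, c = (M j').card}) := by
    constructor
    · intro h
      obtain ⟨j', h1, h2⟩ := P2.mp h
      have hcd : σ⁻¹ a < σ⁻¹ b := Fin.lt_def.mpr (by omega)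
      refine ⟨fun hmem => absurd (hD.mp hmem) (not_lt.mpr hcd.le), ?_⟩
      exact (hEiff hcd).mp ⟨j', h1, h2⟩
    · rintro ⟨hnotD, hsub⟩
      have hcd : σ⁻¹ a < σ⁻¹ b := by
        rcases lt_trichotomy (σ⁻¹ a) (σ⁻¹ b) with h | h | h
        · exact h
        · exact absurd h hinvne
        · exact absurd (hD.mpr h) hnotD
      exact P2.mpr ((hEiff hcd).mpr hsub)
  refine ⟨part1, ?_, part3⟩
  constructor
  · intro h
    have h1 : (j + 1) ∉ DpermF σ⁻¹ := fun hm =>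
      absurd (part1.mpr hm) (not_lt.mpr h.le)
    refine ⟨h1, fun hs => ?_⟩
    exact absurd (part3.mpr ⟨h1, hs⟩) (not_lt.mpr h.ge)
  · rintro ⟨h1, h2⟩
    rcases lt_trichotomy (firstPos M a) (firstPos M b) with h | h | h
    · exact absurd ((part3.mp h).2) h2
    · exact h
    · exact absurd (part1.mp h) h1
end
end

section
/- For every composition α of n and permutation w with D(w) = D(α): in the 0-Hecke algebra Hₙ(0), the module P_α = Hₙ(0)·π̄_{w₀(α)}π_{w₀(α^c)} has F-basis {π̄_w π_{w₀(α^c)} : w ∈ [w₀(α), w₁(α)]}, and the action of π̄ᵢ on the basis element π̄_w π_{w₀(α^c)} (for D(w) = D(α)) is: -π̄_w π_{w₀(α^c)} if i ∈ D(w⁻¹); 0 if i ∉ D(w⁻¹) and D(sᵢw) ⊄ D(α); and π̄_{sᵢw} π_{w₀(α^c)} if i ∉ D(w⁻¹) and D(sᵢw) ⊆ D(α). -/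
noncomputable section
open scoped Classical

def Dset {n : ℕ} (α : Composition n) : Finset ℕ :=
  Finset.image α.sizeUpTo (Finset.Ioo 0 α.length)

/-- the adjacent transposition `s_j` -/
def sw {n : ℕ} (j : ℕ) (h : j + 1 < n) : Equiv.Perm (Fin n) :=
  Equiv.swap ⟨j, Nat.lt_of_succ_lt h⟩ ⟨j + 1, h⟩

/-- inversion set as a finset -/
def invSet {n : ℕ} (w : Equiv.Perm (Fin n)) : Finset (Fin n × Fin n) :=
  Finset.univ.filter (fun p : Fin n × Fin n => p.1 < p.2 ∧ w p.2 < w p.1)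

lemma invCount_eq_card {n : ℕ} (w : Equiv.Perm (Fin n)) : invCount w = (invSet w).card := rfl

lemma mem_invSet {n : ℕ} (w : Equiv.Perm (Fin n)) (p : Fin n × Fin n) :
    p ∈ invSet w ↔ p.1 < p.2 ∧ w p.2 < w p.1 := by
  simp [invSet]

lemma mem_DpermF {n : ℕ} (w : Equiv.Perm (Fin n)) (j : ℕ) (h : j + 1 < n) :
    (j + 1) ∈ DpermF w ↔ w ⟨j + 1, h⟩ < w ⟨j, Nat.lt_of_succ_lt h⟩ := by
  simp only [DpermF, Finset.mem_image, Finset.mem_filter, Finset.mem_univ, true_and]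
  constructor
  · rintro ⟨a, ⟨ha, hlt⟩, heq⟩
    have : (a : ℕ) = j := by omega
    have ha' : a = ⟨j, Nat.lt_of_succ_lt h⟩ := Fin.ext this
    subst ha'
    convert hlt using 2
  · intro hlt
    exact ⟨⟨j, Nat.lt_of_succ_lt h⟩, ⟨h, hlt⟩, rfl⟩

lemma DpermF_mem_bounds {n : ℕ} {w : Equiv.Perm (Fin n)} {m : ℕ} (hm : m ∈ DpermF w) :
    0 < m ∧ m < n := by
  simp only [DpermF, Finset.mem_image, Finset.mem_filter, Finset.mem_univ, true_and] at hm
  obtain ⟨a, ⟨ha, _⟩, rfl⟩ := hm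
  omega

lemma DpermF_subset_Ioo {n : ℕ} (w : Equiv.Perm (Fin n)) : DpermF w ⊆ Finset.Ioo 0 n := by
  intro m hm
  have := DpermF_mem_bounds hm
  simp [Finset.mem_Ioo]; omega

/-- order behavior of adjacent swaps -/
lemma sw_lt_iff {n : ℕ} (j : ℕ) (h : j + 1 < n) (x y : Fin n) (hxy : x < y) :
    sw j h y < sw j h x ↔ ((x : ℕ) = j ∧ (y : ℕ) = j + 1) := by
  unfold sw
  rw [Equiv.swap_apply_def, Equiv.swap_apply_def]
  have hx := x.isLt; have hy := y.isLt
  rw [Fin.lt_def] at hxy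
  split_ifs with h1 h2 h3 h3 h4 h4 h5 h5 h6 <;>
    simp only [Fin.lt_def, Fin.ext_iff, Fin.val_mk] at * <;> omega

lemma sw_lt_of_lt {n : ℕ} (j : ℕ) (h : j + 1 < n) {x y : Fin n} (hxy : x < y)
    (hne : ¬((x : ℕ) = j ∧ (y : ℕ) = j + 1)) : sw j h x < sw j h y := by
  have h1 : ¬ (sw j h y < sw j h x) := by rw [sw_lt_iff j h x y hxy]; exact hne
  have h2 : sw j h x ≠ sw j h y := by
    intro hc; exact absurd (Equiv.injective _ hc) (ne_of_lt hxy)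
  omega
section Dev2
variable {n : ℕ}

lemma sw_apply_fst (j : ℕ) (h : j + 1 < n) : sw j h ⟨j, Nat.lt_of_succ_lt h⟩ = ⟨j+1, h⟩ :=
  Equiv.swap_apply_left _ _

lemma sw_apply_snd (j : ℕ) (h : j + 1 < n) : sw j h ⟨j+1, h⟩ = ⟨j, Nat.lt_of_succ_lt h⟩ :=
  Equiv.swap_apply_right _ _

lemma sw_mul_self (j : ℕ) (h : j + 1 < n) : sw j h * sw j h = 1 :=
  Equiv.swap_mul_self _ _

lemma sw_inv (j : ℕ) (h : j + 1 < n) : (sw j h)⁻¹ = sw j h := Equiv.symm_swap _ _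

lemma invSet_sw_mul (j : ℕ) (h : j + 1 < n) (w : Equiv.Perm (Fin n))
    (hpq : w⁻¹ ⟨j, Nat.lt_of_succ_lt h⟩ < w⁻¹ ⟨j+1, h⟩) :
    invSet (sw j h * w) =
      insert (w⁻¹ ⟨j, Nat.lt_of_succ_lt h⟩, w⁻¹ ⟨j+1, h⟩) (invSet w) := by
  set jf : Fin n := ⟨j, Nat.lt_of_succ_lt h⟩ with hjf
  set jf' : Fin n := ⟨j+1, h⟩ with hjf'
  ext z
  obtain ⟨a, b⟩ := z
  simp only [mem_invSet, Finset.mem_insert, Prod.mk.injEq, Equiv.Perm.mul_apply]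
  constructor
  · rintro ⟨hab, hlt⟩
    have hwab : w a ≠ w b := fun hc => (ne_of_lt hab) (w.injective hc)
    rcases lt_or_gt_of_ne hwab with hw | hw
    · -- w a < w b, and sw reverses them: must be the special pair
      have := (sw_lt_iff j h (w a) (w b) hw).1 hlt
      left
      constructor
      · have : w a = jf := Fin.ext this.1
        rw [← this]; simp
      · have : w b = jf' := Fin.ext this.2
        rw [← this]; simp
    · right; exact ⟨hab, hw⟩
  · rintro (⟨ha, hb⟩ | ⟨hab, hlt⟩)
    · subst ha; subst hb
      refine ⟨hpq, ?_⟩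
      rw [Equiv.Perm.coe_inv, Equiv.apply_symm_apply, Equiv.apply_symm_apply, sw_apply_fst, sw_apply_snd]
      rw [Fin.lt_def]; simp
    · refine ⟨hab, ?_⟩
      apply sw_lt_of_lt j h hlt
      rintro ⟨h1, h2⟩
      -- then w b = jf, w a = jf', so w⁻¹ jf = b, w⁻¹ jf' = a, contradicting order
      have hb' : w b = jf := Fin.ext h1
      have ha' : w a = jf' := Fin.ext h2
      have : w⁻¹ jf = b := by rw [← hb']; simp
      have h2' : w⁻¹ jf' = a := by rw [← ha']; simp
      rw [this, h2'] at hpq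
      exact absurd hpq (not_lt.2 (le_of_lt hab))

lemma invCount_sw_mul (j : ℕ) (h : j + 1 < n) (w : Equiv.Perm (Fin n))
    (hpq : w⁻¹ ⟨j, Nat.lt_of_succ_lt h⟩ < w⁻¹ ⟨j+1, h⟩) :
    invCount (sw j h * w) = invCount w + 1 := by
  rw [invCount_eq_card, invCount_eq_card, invSet_sw_mul j h w hpq,
    Finset.card_insert_of_notMem]
  rw [mem_invSet]
  push_neg
  intro _
  simp only [Equiv.Perm.coe_inv, Equiv.apply_symm_apply]
  rw [Fin.le_def]; simp

lemma invCount_sw_mul' (j : ℕ) (h : j + 1 < n) (w : Equiv.Perm (Fin n))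
    (hpq : w⁻¹ ⟨j+1, h⟩ < w⁻¹ ⟨j, Nat.lt_of_succ_lt h⟩) :
    invCount w = invCount (sw j h * w) + 1 := by
  have key := invCount_sw_mul j h (sw j h * w) ?_
  · rw [← mul_assoc, sw_mul_self, one_mul] at key; exact key
  · have : (sw j h * w)⁻¹ = w⁻¹ * sw j h := by
      rw [mul_inv_rev, sw_inv]
    rw [this]
    simp only [Equiv.Perm.mul_apply, sw_apply_fst, sw_apply_snd]
    exact hpq

lemma invCount_one : invCount (1 : Equiv.Perm (Fin n)) = 0 := by
  rw [invCount_eq_card, Finset.card_eq_zero]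
  ext p
  simp only [mem_invSet, Finset.notMem_empty, iff_false, not_and]
  intro hp
  simp only [Equiv.Perm.one_apply]
  exact not_lt.2 (le_of_lt hp)

lemma invCount_sw (j : ℕ) (h : j + 1 < n) : invCount (sw j h) = 1 := by
  have := invCount_sw_mul j h 1 (by rw [Fin.lt_def]; simp)
  rw [mul_one] at this
  rw [this, invCount_one]

lemma invCount_inv (w : Equiv.Perm (Fin n)) : invCount w⁻¹ = invCount w := by
  rw [invCount_eq_card, invCount_eq_card]
  apply Finset.card_nbij' (i := fun p => (w⁻¹ p.2, w⁻¹ p.1)) (j := fun p => (w p.2, w p.1))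
  · intro p hp
    rw [Finset.mem_coe, mem_invSet] at hp
    rw [Finset.mem_coe, mem_invSet]
    simp only [Equiv.Perm.coe_inv, Equiv.apply_symm_apply]
    exact ⟨hp.2, hp.1⟩
  · intro p hp
    rw [Finset.mem_coe, mem_invSet] at hp
    rw [Finset.mem_coe, mem_invSet]
    simp only [Equiv.Perm.coe_inv, Equiv.symm_apply_apply]
    exact ⟨hp.2, hp.1⟩
  · intro p _; simp
  · intro p _; simp

/-- every non-identity permutation has a descent -/
lemma exists_descent_s19 (u : Equiv.Perm (Fin n)) (hu : u ≠ 1) :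
    ∃ (j : ℕ) (h : j + 1 < n), u ⟨j+1, h⟩ < u ⟨j, Nat.lt_of_succ_lt h⟩ := by
  by_contra hc
  push_neg at hc
  apply hu
  have hmono : StrictMono u := by
    cases n with
    | zero => intro a; exact absurd a.isLt (by omega)
    | succ m =>
      rw [Fin.strictMono_iff_lt_succ]
      intro i
      have h2 : (i : ℕ) + 1 < m + 1 := by omega
      have := hc i h2
      have he1 : i.castSucc = ⟨(i : ℕ), by omega⟩ := by ext; simp
      have he2 : i.succ = ⟨(i : ℕ) + 1, h2⟩ := by ext; simp
      rw [he1, he2]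
      rcases lt_trichotomy (u ⟨(i:ℕ), by omega⟩) (u ⟨(i:ℕ)+1, h2⟩) with h | h | h
      · exact h
      · exact absurd (Fin.ext_iff.1 h) (by
          intro hh
          have := u.injective (Fin.ext hh)
          simp only [Fin.ext_iff] at this
          omega)
      · exact absurd h (not_lt.2 this)
  have : Set.range u = Set.range (id : Fin n → Fin n) := by
    simp [Set.range_id, Set.range_eq_univ.2 u.surjective]
  have inst : WellFoundedLT (Fin n) := inferInstance
  have := (@StrictMono.range_inj (Fin n) (Fin n) _ _ inst (⇑u) id hmono strictMono_id).1 this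
  ext x
  rw [Equiv.Perm.one_apply]
  exact congrArg Fin.val (congrFun this x)

/-- left descent existence: for u ≠ 1 there is j with invCount (sw j h * u) + 1 = invCount u -/
lemma exists_left_descent (u : Equiv.Perm (Fin n)) (hu : u ≠ 1) :
    ∃ (j : ℕ) (h : j + 1 < n), invCount u = invCount (sw j h * u) + 1 := by
  have hu' : u⁻¹ ≠ 1 := fun hc => hu (by rw [← inv_inv u, hc]; simp)
  obtain ⟨j, h, hd⟩ := exists_descent_s19 u⁻¹ hu'
  exact ⟨j, h, invCount_sw_mul' j h u hd⟩

lemma invCount_mul_le (u v : Equiv.Perm (Fin n)) :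
    invCount (u * v) ≤ invCount u + invCount v := by
  generalize hk : invCount u = k
  induction k using Nat.strong_induction_on generalizing u with
  | _ k ih =>
    by_cases h1 : u = 1
    · subst h1; rw [one_mul, invCount_one] at *; omega
    · obtain ⟨j, h, hd⟩ := exists_left_descent u h1
      set u' := sw j h * u with hu'
      have hlt : invCount u' < k := by omega
      have huu : u = sw j h * u' := by rw [hu', ← mul_assoc, sw_mul_self, one_mul]
      have h2 := ih (invCount u') hlt u' rfl
      -- invCount (sw * x) ≤ invCount x + 1 always
      have h3 : invCount (u * v) ≤ invCount (u' * v) + 1 := by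
        have : u * v = sw j h * (u' * v) := by rw [huu, mul_assoc]
        rw [this]
        rcases lt_or_ge ((u' * v)⁻¹ ⟨j, Nat.lt_of_succ_lt h⟩) ((u' * v)⁻¹ ⟨j+1, h⟩) with hc | hc
        · rw [invCount_sw_mul j h _ hc]
        · rcases eq_or_lt_of_le hc with hc' | hc'
          · exact absurd (Equiv.injective _ hc') (by simp [Fin.ext_iff])
          · have := invCount_sw_mul' j h (u' * v) hc'
            omega
      omega

end Dev2
section Dev3
variable {n : ℕ}

/-- start of the block containing position `x` (labels in `T` join positions) -/
def blkA (T : Finset ℕ) (x : ℕ) : ℕ := Nat.findGreatest (fun c => c ∉ T) x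

lemma blkB_exists (T : Finset ℕ) (x : ℕ) : ∃ c, x ≤ c ∧ c + 1 ∉ T := by
  refine ⟨max x (T.sup id), le_max_left _ _, fun hc => ?_⟩
  have := Finset.le_sup (f := id) hc
  simp only [id] at this
  have := le_max_right x (T.sup id)
  omega

/-- end of the block containing position `x` -/
def blkB (T : Finset ℕ) (x : ℕ) : ℕ := Nat.find (blkB_exists T x)

variable {T : Finset ℕ}

lemma blkA_le (x : ℕ) : blkA T x ≤ x := Nat.findGreatest_le x

lemma blkA_not_mem (h0 : 0 ∉ T) (x : ℕ) : blkA T x ∉ T :=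
  Nat.findGreatest_spec (P := fun c => c ∉ T) (Nat.zero_le x) h0

lemma blkA_maximal {x c : ℕ} (hc : blkA T x < c) (hcx : c ≤ x) : c ∈ T := by
  by_contra hc2
  exact Nat.findGreatest_is_greatest hc hcx hc2

lemma le_blkA {c x : ℕ} (hcx : c ≤ x) (hc : c ∉ T) : c ≤ blkA T x :=
  Nat.le_findGreatest hcx hc

lemma le_blkB (x : ℕ) : x ≤ blkB T x := (Nat.find_spec (blkB_exists T x)).1

lemma blkB_succ_not_mem (x : ℕ) : blkB T x + 1 ∉ T := (Nat.find_spec (blkB_exists T x)).2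

lemma blkB_minimal {x c : ℕ} (hxc : x ≤ c) (hc : c < blkB T x) : c + 1 ∈ T := by
  by_contra hc2
  have h : blkB T x ≤ c := Nat.find_min' (blkB_exists T x) ⟨hxc, hc2⟩
  omega

lemma blkB_lt (hT : T ⊆ Finset.Ioo 0 n) {x : ℕ} (hx : x < n) : blkB T x < n := by
  have hn : n ∉ T := fun hc => by simpa using (Finset.mem_Ioo.1 (hT hc)).2
  have : blkB T x ≤ n - 1 := Nat.find_min' (blkB_exists T x) ⟨by omega, by
    have : n - 1 + 1 = n := by omega
    rw [this]; exact hn⟩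
  omega

lemma mem_of_between {x c : ℕ} (hc1 : blkA T x < c) (hc2 : c ≤ blkB T x) : c ∈ T := by
  rcases le_or_gt c x with h | h
  · exact blkA_maximal hc1 h
  · have hx1 : x ≤ c - 1 := by omega
    have hx2 : c - 1 < blkB T x := by omega
    have hmem := blkB_minimal hx1 hx2
    have hcc : c - 1 + 1 = c := by omega
    rwa [hcc] at hmem

lemma blkA_block_const (h0 : 0 ∉ T) {x y : ℕ} (h1 : blkA T x ≤ y) (h2 : y ≤ blkB T x) :
    blkA T y = blkA T x := by
  apply le_antisymm
  · by_contra hc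
    push_neg at hc
    have h3 : blkA T y ∉ T := blkA_not_mem h0 y
    have h4 : blkA T y ≤ y := blkA_le y
    exact h3 (mem_of_between hc (le_trans h4 h2))
  · exact le_blkA h1 (blkA_not_mem h0 x)

lemma blkB_block_const (h0 : 0 ∉ T) {x y : ℕ} (h1 : blkA T x ≤ y) (h2 : y ≤ blkB T x) :
    blkB T y = blkB T x := by
  apply le_antisymm
  · exact Nat.find_min' (blkB_exists T y) ⟨h2, blkB_succ_not_mem x⟩
  · by_contra hc
    push_neg at hc
    -- blkB T y < blkB T x; blkB T y + 1 ∈ T by between (blkA x < blkB y + 1 ≤ blkB x)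
    have h3 : blkA T x < blkB T y + 1 := by
      have := le_blkB (T := T) y; omega
    exact (blkB_succ_not_mem y) (mem_of_between h3 (by omega))

/-- The block-reversing function associated to `T`. -/
def wTf (T : Finset ℕ) {n : ℕ} (hT : T ⊆ Finset.Ioo 0 n) : Fin n → Fin n := fun x =>
  ⟨blkA T x + blkB T x - x, by
    have h1 := blkA_le (T := T) (x : ℕ)
    have h2 := le_blkB (T := T) (x : ℕ)
    have := blkB_lt hT x.isLt
    omega⟩

lemma hT_zero (hT : T ⊆ Finset.Ioo 0 n) : 0 ∉ T := fun hc => by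
  simpa using (Finset.mem_Ioo.1 (hT hc)).1

lemma wTf_val (hT : T ⊆ Finset.Ioo 0 n) (x : Fin n) :
    (wTf T hT x : ℕ) = blkA T x + blkB T x - x := rfl

lemma wTf_involutive (hT : T ⊆ Finset.Ioo 0 n) : Function.Involutive (wTf T hT) := by
  intro x
  have h1 := blkA_le (T := T) (x : ℕ)
  have h2 := le_blkB (T := T) (x : ℕ)
  have hy1 : blkA T x ≤ (wTf T hT x : ℕ) := by rw [wTf_val]; omega
  have hy2 : (wTf T hT x : ℕ) ≤ blkB T x := by rw [wTf_val]; omega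
  have hA : blkA T (wTf T hT x : ℕ) = blkA T x := blkA_block_const (hT_zero hT) hy1 hy2
  have hB : blkB T (wTf T hT x : ℕ) = blkB T x := blkB_block_const (hT_zero hT) hy1 hy2
  ext
  rw [wTf_val, hA, hB, wTf_val]
  omega

/-- The block-reversing involution associated to `T`, as a permutation. -/
def wT (T : Finset ℕ) {n : ℕ} (hT : T ⊆ Finset.Ioo 0 n) : Equiv.Perm (Fin n) :=
  (wTf_involutive hT).toPerm _

lemma wT_apply (hT : T ⊆ Finset.Ioo 0 n) (x : Fin n) :
    ((wT T hT) x : ℕ) = blkA T x + blkB T x - x := rfl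

lemma wT_invol (hT : T ⊆ Finset.Ioo 0 n) : wT T hT * wT T hT = 1 := by
  ext x
  simp only [Equiv.Perm.mul_apply, Equiv.Perm.one_apply]
  exact congrArg Fin.val (wTf_involutive hT x)

lemma wT_blkA (hT : T ⊆ Finset.Ioo 0 n) (x : Fin n) :
    blkA T (wT T hT x : ℕ) = blkA T x := by
  have h1 := blkA_le (T := T) (x : ℕ)
  have h2 := le_blkB (T := T) (x : ℕ)
  exact blkA_block_const (hT_zero hT) (by rw [wT_apply]; omega) (by rw [wT_apply]; omega)

lemma wT_blkB (hT : T ⊆ Finset.Ioo 0 n) (x : Fin n) :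
    blkB T (wT T hT x : ℕ) = blkB T x := by
  have h1 := blkA_le (T := T) (x : ℕ)
  have h2 := le_blkB (T := T) (x : ℕ)
  exact blkB_block_const (hT_zero hT) (by rw [wT_apply]; omega) (by rw [wT_apply]; omega)

/-- same-block pairs are reversed -/
lemma wT_lt_same (hT : T ⊆ Finset.Ioo 0 n) {x y : Fin n} (hxy : x < y)
    (hblk : blkA T x = blkA T y) : wT T hT y < wT T hT x := by
  have hyB : (y : ℕ) ≤ blkB T x := by
    by_contra hc
    push_neg at hc
    have h5 : blkB T (x : ℕ) + 1 ≤ blkA T y := le_blkA (by omega) (blkB_succ_not_mem _)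
    have h6 := blkA_le (T := T) (x : ℕ)
    have h7 := le_blkB (T := T) (x : ℕ)
    rw [Fin.lt_def] at hxy
    omega
  have hBeq : blkB T (y : ℕ) = blkB T x :=
    blkB_block_const (hT_zero hT) (hblk ▸ blkA_le (y : ℕ)) hyB
  rw [Fin.lt_def, wT_apply, wT_apply, hblk, hBeq]
  have h1 := blkA_le (T := T) (y : ℕ)
  have h2 := le_blkB (T := T) (x : ℕ)
  rw [Fin.lt_def] at hxy
  have h3 := le_blkB (T := T) (y : ℕ)
  omega

/-- cross-block pairs are preserved -/
lemma wT_lt_cross (hT : T ⊆ Finset.Ioo 0 n) {x y : Fin n} (hxy : x < y)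
    (hblk : blkA T x ≠ blkA T y) : wT T hT x < wT T hT y := by
  rw [Fin.lt_def] at hxy
  have hle : blkA T (x : ℕ) ≤ blkA T (y : ℕ) :=
    le_blkA (le_trans (blkA_le _) (le_of_lt hxy)) (blkA_not_mem (hT_zero hT) _)
  have hlt : blkA T (x : ℕ) < blkA T (y : ℕ) := lt_of_le_of_ne hle hblk
  have hcross : blkB T (x : ℕ) < blkA T (y : ℕ) := by
    by_contra hc
    push_neg at hc
    exact (blkA_not_mem (hT_zero hT) (y : ℕ)) (mem_of_between hlt hc)
  rw [Fin.lt_def, wT_apply, wT_apply]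
  have h1 := blkA_le (T := T) (x : ℕ)
  have h2 := le_blkB (T := T) (y : ℕ)
  omega

end Dev3
section Dev4
variable {n : ℕ} {T : Finset ℕ}

def blkPairs (T : Finset ℕ) (n : ℕ) : Finset (Fin n × Fin n) :=
  Finset.univ.filter (fun p => p.1 < p.2 ∧ blkA T p.1 = blkA T p.2)

lemma mem_blkPairs (p : Fin n × Fin n) :
    p ∈ blkPairs T n ↔ p.1 < p.2 ∧ blkA T (p.1 : ℕ) = blkA T (p.2 : ℕ) := by
  simp [blkPairs]

lemma wT_wT (hT : T ⊆ Finset.Ioo 0 n) (x : Fin n) : wT T hT (wT T hT x) = x :=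
  wTf_involutive hT x

lemma invSet_wT (hT : T ⊆ Finset.Ioo 0 n) : invSet (wT T hT) = blkPairs T n := by
  ext p
  rw [mem_invSet, mem_blkPairs]
  constructor
  · rintro ⟨h1, h2⟩
    refine ⟨h1, ?_⟩
    by_contra hc
    exact absurd (wT_lt_cross hT h1 hc) (not_lt.2 (le_of_lt h2))
  · rintro ⟨h1, h2⟩
    exact ⟨h1, wT_lt_same hT h1 h2⟩

lemma invCount_wT (hT : T ⊆ Finset.Ioo 0 n) :
    invCount (wT T hT) = (blkPairs T n).card := by
  rw [invCount_eq_card, invSet_wT hT]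

lemma blkA_succ_eq_iff (h0 : 0 ∉ T) (j : ℕ) :
    blkA T j = blkA T (j + 1) ↔ (j + 1) ∈ T := by
  unfold blkA
  rw [Nat.findGreatest_succ]
  constructor
  · intro h
    by_contra hc
    rw [if_pos hc] at h
    have := Nat.findGreatest_le (P := fun c => c ∉ T) j
    omega
  · intro h
    rw [if_neg (by simpa using h)]

lemma DpermF_wT (hT : T ⊆ Finset.Ioo 0 n) : DpermF (wT T hT) = T := by
  ext m
  constructor
  · intro hm
    obtain ⟨h0, hn⟩ := DpermF_mem_bounds hm
    obtain ⟨j, rfl⟩ : ∃ j, m = j + 1 := ⟨m - 1, by omega⟩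
    rw [mem_DpermF _ j hn] at hm
    have hblk : blkA T j = blkA T (j + 1) := by
      by_contra hc
      have hx : (⟨j, Nat.lt_of_succ_lt hn⟩ : Fin n) < ⟨j+1, hn⟩ := by
        rw [Fin.lt_def]; simp
      exact absurd (wT_lt_cross hT hx hc) (not_lt.2 (le_of_lt hm))
    exact (blkA_succ_eq_iff (hT_zero hT) j).1 hblk
  · intro hm
    have hmIoo := Finset.mem_Ioo.1 (hT hm)
    obtain ⟨j, rfl⟩ : ∃ j, m = j + 1 := ⟨m - 1, by omega⟩
    rw [mem_DpermF _ j hmIoo.2]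
    apply wT_lt_same hT (by rw [Fin.lt_def]; simp)
    exact (blkA_succ_eq_iff (hT_zero hT) j).2 hm

lemma le_blkB_of_blkA_eq {x y : ℕ} (hxy : x ≤ y) (hblk : blkA T x = blkA T y) :
    y ≤ blkB T x := by
  by_contra hc
  push_neg at hc
  have h5 : blkB T x + 1 ≤ blkA T y := le_blkA (by omega) (blkB_succ_not_mem _)
  have h6 := blkA_le (T := T) x
  have h7 := le_blkB (T := T) x
  omega

lemma mem_of_between_blkA {x y c : ℕ} (hxc : x < c) (hcy : c ≤ y)
    (hblk : blkA T x = blkA T y) : c ∈ T := by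
  have h1 := blkA_le (T := T) x
  have h2 : y ≤ blkB T x := le_blkB_of_blkA_eq (x := x) (y := y) (by omega) hblk
  exact mem_of_between (x := x) (by omega) (by omega)

/-- if all labels in T are descents of v, then v decreases along blocks -/
lemma chain_desc {v : Equiv.Perm (Fin n)} (h0 : 0 ∉ T) (hsub : T ⊆ DpermF v)
    {x y : Fin n} (hxy : x < y) (hblk : blkA T (x : ℕ) = blkA T (y : ℕ)) : v y < v x := by
  rw [Fin.lt_def] at hxy
  obtain ⟨k, hk⟩ : ∃ k, (y : ℕ) = (x : ℕ) + k + 1 := ⟨(y : ℕ) - (x : ℕ) - 1, by omega⟩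
  induction k generalizing x with
  | zero =>
    have hmem : ((x : ℕ) + 1) ∈ T := mem_of_between_blkA (by omega) (by omega) hblk
    have hlt : (x : ℕ) + 1 < n := by have := y.isLt; omega
    have h := (mem_DpermF v (x : ℕ) hlt).1 (hsub hmem)
    have e1 : (⟨(x : ℕ) + 1, hlt⟩ : Fin n) = y := Fin.ext (by simp [Fin.val_mk]; omega)
    rw [e1, Fin.eta] at h
    exact h
  | succ k ih =>
    have hzlt : (x : ℕ) + 1 < n := by have := y.isLt; omega
    set z : Fin n := ⟨(x : ℕ) + 1, hzlt⟩ with hz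
    have hmem : ((x : ℕ) + 1) ∈ T := mem_of_between_blkA (by omega) (by omega) hblk
    have hzval : (z : ℕ) = (x : ℕ) + 1 := by simp only [hz, Fin.val_mk]
    have hblkz : blkA T (z : ℕ) = blkA T (y : ℕ) := by
      rw [← hblk]
      have h1 := blkA_le (T := T) (x : ℕ)
      have hzy : (z : ℕ) ≤ (y : ℕ) := by omega
      have h2 : (z : ℕ) ≤ blkB T (x : ℕ) :=
        le_trans hzy (le_blkB_of_blkA_eq (x := (x:ℕ)) (y := (y:ℕ)) (by omega) hblk)
      exact blkA_block_const h0 (by omega) h2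
    have h1 : v y < v z := ih (by omega) hblkz (by omega)
    have h2 : v z < v x := by
      have h := (mem_DpermF v (x : ℕ) hzlt).1 (hsub hmem)
      rw [Fin.eta] at h
      exact h
    exact lt_trans h1 h2

/-- if no label in T is a descent of v, then v increases along blocks -/
lemma chain_asc {v : Equiv.Perm (Fin n)} (h0 : 0 ∉ T) (hdis : ∀ m ∈ T, m ∉ DpermF v)
    {x y : Fin n} (hxy : x < y) (hblk : blkA T (x : ℕ) = blkA T (y : ℕ)) : v x < v y := by
  rw [Fin.lt_def] at hxy
  obtain ⟨k, hk⟩ : ∃ k, (y : ℕ) = (x : ℕ) + k + 1 := ⟨(y : ℕ) - (x : ℕ) - 1, by omega⟩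
  induction k generalizing x with
  | zero =>
    have hmem : ((x : ℕ) + 1) ∈ T := mem_of_between_blkA (by omega) (by omega) hblk
    have hlt : (x : ℕ) + 1 < n := by have := y.isLt; omega
    have h := hdis _ hmem
    rw [mem_DpermF v (x : ℕ) hlt] at h
    have e1 : (⟨(x : ℕ) + 1, hlt⟩ : Fin n) = y := Fin.ext (by simp [Fin.val_mk]; omega)
    rw [e1, Fin.eta] at h
    rcases lt_or_ge (v x) (v y) with hgood | hbad
    · exact hgood
    · rcases eq_or_lt_of_le hbad with heq | hlt2
      · exact absurd (v.injective heq) (by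
          intro hc
          rw [hc] at hxy; omega)
      · exact absurd hlt2 h
  | succ k ih =>
    have hzlt : (x : ℕ) + 1 < n := by have := y.isLt; omega
    set z : Fin n := ⟨(x : ℕ) + 1, hzlt⟩ with hz
    have hmem : ((x : ℕ) + 1) ∈ T := mem_of_between_blkA (by omega) (by omega) hblk
    have hzval : (z : ℕ) = (x : ℕ) + 1 := by simp only [hz, Fin.val_mk]
    have hblkz : blkA T (z : ℕ) = blkA T (y : ℕ) := by
      rw [← hblk]
      have h1 := blkA_le (T := T) (x : ℕ)
      have hzy : (z : ℕ) ≤ (y : ℕ) := by omega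
      have h2 : (z : ℕ) ≤ blkB T (x : ℕ) :=
        le_trans hzy (le_blkB_of_blkA_eq (x := (x:ℕ)) (y := (y:ℕ)) (by omega) hblk)
      exact blkA_block_const h0 (by omega) h2
    have h1 : v z < v y := ih (by omega) hblkz (by omega)
    have h2 : v x < v z := by
      have h := hdis _ hmem
      rw [mem_DpermF v (x : ℕ) hzlt] at h
      rw [Fin.eta] at h
      rcases lt_or_ge (v x) (v z) with hgood | hbad
      · exact hgood
      · rcases eq_or_lt_of_le hbad with heq | hlt2
        · exfalso
          have hc := v.injective heq
          have : (z : ℕ) = (x : ℕ) := congrArg Fin.val hc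
          omega
        · exact absurd hlt2 (by
            intro hcc
            exact h (by rw [hz] at hcc; exact hcc))
    exact lt_trans h2 h1

/-- inversion sets determine permutations -/
lemma perm_eq_of_invSet_eq {u v : Equiv.Perm (Fin n)} (h : invSet u = invSet v) : u = v := by
  have hmono : StrictMono (⇑u ∘ ⇑v⁻¹) := by
    intro a b hab
    simp only [Function.comp_apply]
    set p := v⁻¹ a with hp
    set q := v⁻¹ b with hq
    have hvp : v p = a := by simp [hp]
    have hvq : v q = b := by simp [hq]
    have hpq : p ≠ q := fun hc => (ne_of_lt hab) (by rw [← hvp, ← hvq, hc])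
    rcases lt_or_gt_of_ne hpq with hlt | hgt
    · have : (p, q) ∉ invSet v := by
        rw [mem_invSet]
        push_neg
        intro _
        rw [hvp, hvq]
        exact le_of_lt hab
      rw [← h, mem_invSet] at this
      push_neg at this
      have hle := this hlt
      rcases eq_or_lt_of_le hle with heq | hlt2
      · exact absurd (u.injective heq) hpq
      · exact hlt2
    · have : (q, p) ∈ invSet v := by
        rw [mem_invSet]
        exact ⟨hgt, by rw [hvp, hvq]; exact hab⟩
      rw [← h, mem_invSet] at this
      exact this.2
  have hrange : Set.range (⇑u ∘ ⇑v⁻¹) = Set.range (id : Fin n → Fin n) := by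
    simp only [Set.range_id]
    rw [Set.range_comp]
    simp [Set.range_eq_univ.2 v⁻¹.surjective, Set.image_univ,
      Set.range_eq_univ.2 u.surjective]
  have inst : WellFoundedLT (Fin n) := inferInstance
  have heq := (@StrictMono.range_inj (Fin n) (Fin n) _ _ inst _ id hmono strictMono_id).1 hrange
  ext x
  have := congrFun heq (v x)
  simp only [Function.comp_apply, Equiv.Perm.coe_inv, Equiv.symm_apply_apply, id_eq] at this
  rw [this]

/-- a minimal-length permutation with descent set T is the block involution wT -/
lemma eq_wT_of_min (hT : T ⊆ Finset.Ioo 0 n) {v : Equiv.Perm (Fin n)}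
    (hv : DpermF v = T) (hmin : ∀ u : Equiv.Perm (Fin n), DpermF u = T → invCount v ≤ invCount u) :
    v = wT T hT := by
  have h1 : blkPairs T n ⊆ invSet v := by
    intro p hp
    rw [mem_blkPairs] at hp
    rw [mem_invSet]
    exact ⟨hp.1, chain_desc (hT_zero hT) (hv ▸ Finset.Subset.refl T) hp.1 hp.2⟩
  have h2 : invCount v ≤ invCount (wT T hT) := hmin _ (DpermF_wT hT)
  rw [invCount_wT hT, invCount_eq_card] at h2
  have h3 : blkPairs T n = invSet v := Finset.eq_of_subset_of_card_le h1 h2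
  exact perm_eq_of_invSet_eq (by rw [invSet_wT hT, h3])

end Dev4
section Dev5
variable {n : ℕ} {T : Finset ℕ}

lemma wT_blkA_eq_iff (hT : T ⊆ Finset.Ioo 0 n) (x y : Fin n) :
    blkA T (wT T hT x : ℕ) = blkA T (wT T hT y : ℕ) ↔ blkA T (x : ℕ) = blkA T (y : ℕ) := by
  rw [wT_blkA hT, wT_blkA hT]

/-- Master counting lemma: multiplying by the block involution `wT` on the right
exchanges within-block inversions and within-block non-inversions. -/
lemma invCount_mul_wT (hT : T ⊆ Finset.Ioo 0 n) (v : Equiv.Perm (Fin n)) :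
    invCount (v * wT T hT) =
      ((blkPairs T n) \ invSet v).card + ((invSet v) \ (blkPairs T n)).card := by
  have hdisj : Disjoint (blkPairs T n \ invSet v) (invSet v \ blkPairs T n) := by
    rw [Finset.disjoint_left]
    intro a ha hb
    rw [Finset.mem_sdiff] at ha hb
    exact hb.2 ha.1
  rw [invCount_eq_card, ← Finset.card_union_of_disjoint hdisj]
  set W := wT T hT with hW
  apply Finset.card_bij' (i := fun (p : Fin n × Fin n) (_ : p ∈ invSet (v * W)) =>
      if blkA T (p.1 : ℕ) = blkA T (p.2 : ℕ) then (W p.2, W p.1) else (W p.1, W p.2))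
    (j := fun (q : Fin n × Fin n) (_ : q ∈ blkPairs T n \ invSet v ∪ invSet v \ blkPairs T n) =>
      if blkA T (q.1 : ℕ) = blkA T (q.2 : ℕ) then (W q.2, W q.1) else (W q.1, W q.2))
  · -- forward membership
    rintro ⟨x, y⟩ hp
    rw [mem_invSet] at hp
    obtain ⟨hxy, hv⟩ := hp
    simp only [Equiv.Perm.mul_apply] at hv
    by_cases hb : blkA T (x : ℕ) = blkA T (y : ℕ)
    · rw [if_pos hb]
      apply Finset.mem_union_left
      rw [Finset.mem_sdiff, mem_blkPairs, mem_invSet]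
      refine ⟨⟨wT_lt_same hT hxy hb, ?_⟩, ?_⟩
      · rw [wT_blkA hT, wT_blkA hT, hb]
      · push_neg
        intro _
        exact le_of_lt hv
    · rw [if_neg hb]
      apply Finset.mem_union_right
      rw [Finset.mem_sdiff, mem_invSet, mem_blkPairs]
      refine ⟨⟨wT_lt_cross hT hxy hb, hv⟩, ?_⟩
      push_neg
      intro _
      rw [wT_blkA hT, wT_blkA hT]
      exact hb
  · -- backward membership
    rintro ⟨x, y⟩ hq
    simp only [Finset.mem_union, Finset.mem_sdiff, mem_invSet, mem_blkPairs] at hq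
    rcases hq with ⟨⟨hxy, hb⟩, hni⟩ | ⟨⟨hxy, hv⟩, hnb⟩
    · rw [if_pos hb]
      rw [mem_invSet]
      push_neg at hni
      have hvxy : v x < v y := by
        have h1 := hni hxy
        rcases eq_or_lt_of_le h1 with heq | h2
        · exact absurd (v.injective heq) (fun hc => (ne_of_lt hxy) hc)
        · exact h2
      refine ⟨wT_lt_same hT hxy hb, ?_⟩
      simp only [Equiv.Perm.mul_apply, hW]
      rw [wT_wT hT, wT_wT hT]
      exact hvxy
    · have hb : ¬ (blkA T (x:ℕ) = blkA T (y:ℕ)) := fun hc => hnb ⟨hxy, hc⟩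
      rw [if_neg hb, mem_invSet]
      refine ⟨wT_lt_cross hT hxy hb, ?_⟩
      simp only [Equiv.Perm.mul_apply, hW]
      rw [wT_wT hT, wT_wT hT]
      exact hv
  · -- left inverse
    rintro ⟨x, y⟩ hp
    by_cases hb : blkA T (x : ℕ) = blkA T (y : ℕ)
    · rw [if_pos hb, if_pos (by rw [hW, wT_blkA hT, wT_blkA hT]; exact hb.symm)]
      simp only [hW]
      rw [wT_wT hT, wT_wT hT]
    · rw [if_neg hb, if_neg (by rw [hW, wT_blkA hT, wT_blkA hT]; exact hb)]
      simp only [hW]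
      rw [wT_wT hT, wT_wT hT]
  · -- right inverse
    rintro ⟨x, y⟩ hq
    by_cases hb : blkA T (x : ℕ) = blkA T (y : ℕ)
    · rw [if_pos hb, if_pos (by rw [hW, wT_blkA hT, wT_blkA hT]; exact hb.symm)]
      simp only [hW]
      rw [wT_wT hT, wT_wT hT]
    · rw [if_neg hb, if_neg (by rw [hW, wT_blkA hT, wT_blkA hT]; exact hb)]
      simp only [hW]
      rw [wT_wT hT, wT_wT hT]

/-- length is additive for `w * wT` when all block pairs are inversions of `w` -/
lemma invCount_mul_wT_of_sub (hT : T ⊆ Finset.Ioo 0 n) {v : Equiv.Perm (Fin n)}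
    (hsub : blkPairs T n ⊆ invSet v) :
    invCount (v * wT T hT) + invCount (wT T hT) = invCount v := by
  rw [invCount_mul_wT hT v, invCount_wT hT, Finset.sdiff_eq_empty_iff_subset.2 hsub]
  simp only [Finset.card_empty, zero_add]
  rw [invCount_eq_card, Finset.card_sdiff_of_subset hsub]
  have := Finset.card_le_card hsub
  omega

/-- length is additive for `w * wT` when no block pair is an inversion of `w` -/
lemma invCount_mul_wT_of_disj (hT : T ⊆ Finset.Ioo 0 n) {v : Equiv.Perm (Fin n)}
    (hdisj : ∀ p ∈ blkPairs T n, p ∉ invSet v) :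
    invCount (v * wT T hT) = invCount v + invCount (wT T hT) := by
  rw [invCount_mul_wT hT v, invCount_wT hT]
  have h1 : blkPairs T n \ invSet v = blkPairs T n := by
    rw [Finset.sdiff_eq_self_iff_disjoint]
    exact Finset.disjoint_left.2 (fun a ha hb => hdisj a ha hb)
  have h2 : invSet v \ blkPairs T n = invSet v := by
    rw [Finset.sdiff_eq_self_iff_disjoint]
    exact Finset.disjoint_left.2 (fun a ha hb => hdisj a hb ha)
  rw [h1, h2, invCount_eq_card]
  omega

end Dev5
section Dev6
variable {n : ℕ} {A : Type*} [Ring A]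

lemma invCount_sw_mul_or (j : ℕ) (h : j + 1 < n) (x : Equiv.Perm (Fin n)) :
    invCount (sw j h * x) = invCount x + 1 ∨ invCount x = invCount (sw j h * x) + 1 := by
  rcases lt_trichotomy (x⁻¹ ⟨j, Nat.lt_of_succ_lt h⟩) (x⁻¹ ⟨j+1, h⟩) with hc | hc | hc
  · exact Or.inl (invCount_sw_mul j h x hc)
  · exact absurd (x⁻¹.injective hc) (by simp [Fin.ext_iff])
  · exact Or.inr (invCount_sw_mul' j h x hc)

variable (pib : ℕ → A) (pibw : Equiv.Perm (Fin n) → A)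

lemma pibw_sw
    (hone : pibw 1 = 1)
    (hrec : ∀ (j : ℕ) (h : j + 1 < n) (w : Equiv.Perm (Fin n)),
      invCount (sw j h * w) = invCount w + 1 → pibw (sw j h * w) = pib (j + 1) * pibw w)
    (j : ℕ) (h : j + 1 < n) : pibw (sw j h) = pib (j + 1) := by
  have h1 : invCount (sw j h * 1) = invCount (1 : Equiv.Perm (Fin n)) + 1 := by
    rw [mul_one, invCount_sw, invCount_one]
  have := hrec j h 1 h1
  rwa [mul_one, hone, mul_one] at this

lemma pibw_mul
    (hrec : ∀ (j : ℕ) (h : j + 1 < n) (w : Equiv.Perm (Fin n)),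
      invCount (sw j h * w) = invCount w + 1 → pibw (sw j h * w) = pib (j + 1) * pibw w)
    (hone : pibw 1 = 1) :
    ∀ u v : Equiv.Perm (Fin n), invCount (u * v) = invCount u + invCount v →
      pibw (u * v) = pibw u * pibw v := by
  intro u
  generalize hk : invCount u = k
  induction k using Nat.strong_induction_on generalizing u with
  | _ k ih =>
    intro v hadd
    by_cases h1 : u = 1
    · subst h1; rw [one_mul, hone, one_mul]
    · obtain ⟨j, h, hd⟩ := exists_left_descent u h1
      set u' := sw j h * u with hu'
      have huu : u = sw j h * u' := by rw [hu', ← mul_assoc, sw_mul_self, one_mul]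
      have hlt : invCount u' < k := by omega
      -- lengths add for u' * v
      have hle : invCount (u' * v) ≤ invCount u' + invCount v := invCount_mul_le u' v
      have hsw : u * v = sw j h * (u' * v) := by rw [huu, mul_assoc]
      have hadd' : invCount (u' * v) = invCount u' + invCount v := by
        rcases invCount_sw_mul_or j h (u' * v) with hc | hc
        · rw [← hsw] at hc; omega
        · rw [← hsw] at hc; omega
      have hstep : invCount (sw j h * (u' * v)) = invCount (u' * v) + 1 := by
        rw [← hsw]; omega
      have hstep2 : invCount (sw j h * u') = invCount u' + 1 := by
        rw [← huu]; omega
      calc pibw (u * v) = pibw (sw j h * (u' * v)) := by rw [hsw]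
        _ = pib (j + 1) * pibw (u' * v) := hrec j h _ hstep
        _ = pib (j + 1) * (pibw u' * pibw v) := by rw [ih _ hlt u' rfl v hadd']
        _ = (pib (j + 1) * pibw u') * pibw v := by rw [mul_assoc]
        _ = pibw (sw j h * u') * pibw v := by rw [hrec j h u' hstep2]
        _ = pibw u * pibw v := by rw [← huu]

lemma mem_DpermF_inv_iff (w : Equiv.Perm (Fin n)) (j : ℕ) (h : j + 1 < n) :
    (j + 1) ∈ DpermF w⁻¹ ↔ w⁻¹ ⟨j+1, h⟩ < w⁻¹ ⟨j, Nat.lt_of_succ_lt h⟩ :=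
  mem_DpermF w⁻¹ j h

lemma pibw_left_desc
    (hrec : ∀ (j : ℕ) (h : j + 1 < n) (w : Equiv.Perm (Fin n)),
      invCount (sw j h * w) = invCount w + 1 → pibw (sw j h * w) = pib (j + 1) * pibw w)
    {j : ℕ} {h : j + 1 < n} {w : Equiv.Perm (Fin n)}
    (hd : w⁻¹ ⟨j+1, h⟩ < w⁻¹ ⟨j, Nat.lt_of_succ_lt h⟩) :
    invCount w = invCount (sw j h * w) + 1 ∧ pibw w = pib (j + 1) * pibw (sw j h * w) := by
  have h1 : invCount w = invCount (sw j h * w) + 1 := invCount_sw_mul' j h w hd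
  have hww : sw j h * (sw j h * w) = w := by rw [← mul_assoc, sw_mul_self, one_mul]
  have h2 : invCount (sw j h * (sw j h * w)) = invCount (sw j h * w) + 1 := by
    rw [hww]; omega
  have := hrec j h (sw j h * w) h2
  rw [hww] at this
  exact ⟨h1, this⟩

lemma pibw_left_asc
    (hrec : ∀ (j : ℕ) (h : j + 1 < n) (w : Equiv.Perm (Fin n)),
      invCount (sw j h * w) = invCount w + 1 → pibw (sw j h * w) = pib (j + 1) * pibw w)
    {j : ℕ} {h : j + 1 < n} {w : Equiv.Perm (Fin n)}
    (hd : ¬ (w⁻¹ ⟨j+1, h⟩ < w⁻¹ ⟨j, Nat.lt_of_succ_lt h⟩)) :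
    invCount (sw j h * w) = invCount w + 1 ∧ pibw (sw j h * w) = pib (j + 1) * pibw w := by
  have hne : w⁻¹ ⟨j, Nat.lt_of_succ_lt h⟩ ≠ w⁻¹ ⟨j+1, h⟩ := by
    intro hc
    exact absurd (w⁻¹.injective hc) (by simp [Fin.ext_iff])
  have hlt : w⁻¹ ⟨j, Nat.lt_of_succ_lt h⟩ < w⁻¹ ⟨j+1, h⟩ := by
    rcases lt_or_gt_of_ne hne with hc | hc
    · exact hc
    · exact absurd hc hd
  have h1 : invCount (sw j h * w) = invCount w + 1 := invCount_sw_mul j h w hlt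
  exact ⟨h1, hrec j h w h1⟩

lemma invCount_mul_sw_right (j : ℕ) (h : j + 1 < n) (u : Equiv.Perm (Fin n))
    (hd : u ⟨j+1, h⟩ < u ⟨j, Nat.lt_of_succ_lt h⟩) :
    invCount u = invCount (u * sw j h) + 1 := by
  have h1 : (u⁻¹)⁻¹ ⟨j+1, h⟩ < (u⁻¹)⁻¹ ⟨j, Nat.lt_of_succ_lt h⟩ := by
    rw [inv_inv]; exact hd
  have h2 := invCount_sw_mul' j h u⁻¹ h1
  have h3 : sw j h * u⁻¹ = (u * sw j h)⁻¹ := by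
    rw [mul_inv_rev, sw_inv]
  rw [h3, invCount_inv, invCount_inv] at h2
  exact h2

lemma pibw_right_desc
    (hrec : ∀ (j : ℕ) (h : j + 1 < n) (w : Equiv.Perm (Fin n)),
      invCount (sw j h * w) = invCount w + 1 → pibw (sw j h * w) = pib (j + 1) * pibw w)
    (hone : pibw 1 = 1)
    (j : ℕ) (h : j + 1 < n) (u : Equiv.Perm (Fin n))
    (hd : u ⟨j+1, h⟩ < u ⟨j, Nat.lt_of_succ_lt h⟩) :
    pibw u = pibw (u * sw j h) * pib (j + 1) := by
  have h1 := invCount_mul_sw_right j h u hd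
  have h2 : (u * sw j h) * sw j h = u := by rw [mul_assoc, sw_mul_self, mul_one]
  have h3 : invCount ((u * sw j h) * sw j h) = invCount (u * sw j h) + invCount (sw j h) := by
    rw [h2, invCount_sw]; omega
  have := pibw_mul pib pibw hrec hone (u * sw j h) (sw j h) h3
  rw [h2, pibw_sw pib pibw hone hrec] at this
  exact this

/-- descent sets grow under length-increasing left multiplication -/
lemma DpermF_mono {j : ℕ} {h : j + 1 < n} {w : Equiv.Perm (Fin n)}
    (hd : ¬ (w⁻¹ ⟨j+1, h⟩ < w⁻¹ ⟨j, Nat.lt_of_succ_lt h⟩)) :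
    DpermF w ⊆ DpermF (sw j h * w) := by
  intro m hm
  obtain ⟨h0, hn⟩ := DpermF_mem_bounds hm
  obtain ⟨c, rfl⟩ : ∃ c, m = c + 1 := ⟨m - 1, by omega⟩
  rw [mem_DpermF _ c hn] at hm ⊢
  simp only [Equiv.Perm.mul_apply]
  apply sw_lt_of_lt j h hm
  rintro ⟨h1, h2⟩
  apply hd
  have e1 : w ⟨c+1, hn⟩ = ⟨j, Nat.lt_of_succ_lt h⟩ := Fin.ext h1
  have e2 : w ⟨c, Nat.lt_of_succ_lt hn⟩ = ⟨j+1, h⟩ := Fin.ext h2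
  have i1 : w⁻¹ ⟨j, Nat.lt_of_succ_lt h⟩ = ⟨c+1, hn⟩ := by rw [← e1]; simp
  have i2 : w⁻¹ ⟨j+1, h⟩ = ⟨c, Nat.lt_of_succ_lt hn⟩ := by rw [← e2]; simp
  rw [i1, i2, Fin.lt_def]
  simp

end Dev6
section Dev7
variable {F : Type*} [Field F] {A : Type*} [Ring A] [Algebra F A] {n : ℕ}

/-- span of basis elements of length < k -/
def Mlt (F : Type*) [Field F] {A : Type*} [Ring A] [Algebra F A] {n : ℕ}
    (pibw : Equiv.Perm (Fin n) → A) (k : ℕ) : Submodule F A :=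
  Submodule.span F {x | ∃ u : Equiv.Perm (Fin n), invCount u < k ∧ x = pibw u}

variable (pib : ℕ → A) (pibw piw : Equiv.Perm (Fin n) → A)

lemma pibw_mem_Mlt {u : Equiv.Perm (Fin n)} {k : ℕ} (hk : invCount u < k) :
    pibw u ∈ Mlt F pibw k :=
  Submodule.subset_span ⟨u, hk, rfl⟩

lemma Mlt_mono {k k' : ℕ} (hk : k ≤ k') : Mlt F pibw k ≤ Mlt F pibw k' :=
  Submodule.span_mono (fun x ⟨u, hu, hx⟩ => ⟨u, lt_of_lt_of_le hu hk, hx⟩)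

lemma pib_mul_mem_Mlt
    (hrec : ∀ (j : ℕ) (h : j + 1 < n) (w : Equiv.Perm (Fin n)),
      invCount (sw j h * w) = invCount w + 1 → pibw (sw j h * w) = pib (j + 1) * pibw w)
    (hsq : ∀ j : ℕ, j + 1 < n → pib (j+1) * pib (j+1) = -pib (j+1))
    (j : ℕ) (h : j + 1 < n) {k : ℕ} {x : A} (hx : x ∈ Mlt F pibw k) :
    pib (j + 1) * x ∈ Mlt F pibw (k + 1) := by
  refine Submodule.span_induction ?_ ?_ ?_ ?_ hx
  · rintro y ⟨u, hu, rfl⟩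
    by_cases hd : u⁻¹ ⟨j+1, h⟩ < u⁻¹ ⟨j, Nat.lt_of_succ_lt h⟩
    · obtain ⟨h1, h2⟩ := pibw_left_desc pib pibw hrec hd
      rw [h2, ← mul_assoc, hsq j h, neg_mul, ← h2]
      exact Submodule.neg_mem _ (pibw_mem_Mlt pibw (by omega))
    · obtain ⟨h1, h2⟩ := pibw_left_asc pib pibw hrec hd
      rw [← h2]
      exact pibw_mem_Mlt pibw (by omega)
  · rw [mul_zero]; exact Submodule.zero_mem _
  · intro a b _ _ ha hb
    rw [mul_add]; exact Submodule.add_mem _ ha hb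
  · intro a y _ hy
    rw [Algebra.mul_smul_comm]; exact Submodule.smul_mem _ a hy

lemma pibw_mul_mem_Mlt
    (hrec : ∀ (j : ℕ) (h : j + 1 < n) (w : Equiv.Perm (Fin n)),
      invCount (sw j h * w) = invCount w + 1 → pibw (sw j h * w) = pib (j + 1) * pibw w)
    (hone : pibw 1 = 1)
    (hsq : ∀ j : ℕ, j + 1 < n → pib (j+1) * pib (j+1) = -pib (j+1))
    (w : Equiv.Perm (Fin n)) {k : ℕ} {x : A} (hx : x ∈ Mlt F pibw k) :
    pibw w * x ∈ Mlt F pibw (invCount w + k) := by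
  generalize hm : invCount w = m
  induction m using Nat.strong_induction_on generalizing w with
  | _ m ih =>
    by_cases h1 : w = 1
    · subst h1
      rw [invCount_one] at hm
      subst hm
      rw [hone, one_mul, zero_add]
      exact hx
    · obtain ⟨j, h, hd⟩ := exists_left_descent w h1
      set w' := sw j h * w with hw'
      have hww : w = sw j h * w' := by rw [hw', ← mul_assoc, sw_mul_self, one_mul]
      have hstep : invCount (sw j h * w') = invCount w' + 1 := by rw [← hww]; omega
      have hmem := ih (invCount w') (by omega) w' rfl
      have h2 := pib_mul_mem_Mlt pib pibw hrec hsq j h hmem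
      have h3 : pibw w * x = pib (j + 1) * (pibw w' * x) := by
        rw [hww, hrec j h w' hstep, mul_assoc]
      rw [h3]
      exact Mlt_mono pibw (by omega) h2

lemma piw_sub_pibw_mem_Mlt
    (hrec : ∀ (j : ℕ) (h : j + 1 < n) (w : Equiv.Perm (Fin n)),
      invCount (sw j h * w) = invCount w + 1 → pibw (sw j h * w) = pib (j + 1) * pibw w)
    (hrecpi : ∀ (j : ℕ) (h : j + 1 < n) (w : Equiv.Perm (Fin n)),
      invCount (sw j h * w) = invCount w + 1 → piw (sw j h * w) = (pib (j + 1) + 1) * piw w)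
    (hone : pibw 1 = 1) (honepi : piw 1 = 1)
    (hsq : ∀ j : ℕ, j + 1 < n → pib (j+1) * pib (j+1) = -pib (j+1))
    (v : Equiv.Perm (Fin n)) :
    piw v - pibw v ∈ Mlt F pibw (invCount v) := by
  generalize hm : invCount v = m
  induction m using Nat.strong_induction_on generalizing v with
  | _ m ih =>
    by_cases h1 : v = 1
    · subst h1
      rw [hone, honepi, sub_self]
      exact Submodule.zero_mem _
    · obtain ⟨j, h, hd⟩ := exists_left_descent v h1
      set v' := sw j h * v with hv'
      have hvv : v = sw j h * v' := by rw [hv', ← mul_assoc, sw_mul_self, one_mul]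
      have hstep : invCount (sw j h * v') = invCount v' + 1 := by rw [← hvv]; omega
      have hd' : piw v = (pib (j + 1) + 1) * piw v' := by
        rw [hvv]; exact hrecpi j h v' hstep
      have hb' : pibw v = pib (j + 1) * pibw v' := by
        rw [hvv]; exact hrec j h v' hstep
      set d := piw v' - pibw v' with hdd
      have hdm : d ∈ Mlt F pibw (invCount v') := ih (invCount v') (by omega) v' rfl
      have hsplit : piw v - pibw v = pib (j + 1) * d + pibw v' + d := by
        rw [hd', hb', hdd]
        ring_nf
        rw [add_mul, one_mul, mul_sub]
        abel
      rw [hsplit]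
      have m1 : pib (j + 1) * d ∈ Mlt F pibw (invCount v' + 1) :=
        pib_mul_mem_Mlt pib pibw hrec hsq j h hdm
      have m2 : pibw v' ∈ Mlt F pibw (invCount v' + 1) := pibw_mem_Mlt pibw (by omega)
      have m3 : d ∈ Mlt F pibw (invCount v' + 1) := Mlt_mono pibw (by omega) hdm
      have : invCount v' + 1 = m := by omega
      rw [← this]
      exact Submodule.add_mem _ (Submodule.add_mem _ m1 m2) m3

lemma triangular
    (hrec : ∀ (j : ℕ) (h : j + 1 < n) (w : Equiv.Perm (Fin n)),
      invCount (sw j h * w) = invCount w + 1 → pibw (sw j h * w) = pib (j + 1) * pibw w)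
    (hrecpi : ∀ (j : ℕ) (h : j + 1 < n) (w : Equiv.Perm (Fin n)),
      invCount (sw j h * w) = invCount w + 1 → piw (sw j h * w) = (pib (j + 1) + 1) * piw w)
    (hone : pibw 1 = 1) (honepi : piw 1 = 1)
    (hsq : ∀ j : ℕ, j + 1 < n → pib (j+1) * pib (j+1) = -pib (j+1))
    (w v : Equiv.Perm (Fin n)) (hadd : invCount (w * v) = invCount w + invCount v) :
    pibw w * piw v - pibw (w * v) ∈ Mlt F pibw (invCount w + invCount v) := by
  have h1 : pibw (w * v) = pibw w * pibw v := pibw_mul pib pibw hrec hone w v hadd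
  have h2 : pibw w * piw v - pibw (w * v) = pibw w * (piw v - pibw v) := by
    rw [h1, mul_sub]
  rw [h2]
  exact pibw_mul_mem_Mlt pib pibw hrec hone hsq w
    (piw_sub_pibw_mem_Mlt pib pibw piw hrec hrecpi hone honepi hsq v)

end Dev7
/-- Let `A` be the 0-Hecke algebra `Hₙ(0)` over `F`: an `F`-algebra with generators
`π̄₁,…,π̄_{n-1}` satisfying the 0-Hecke relations, elements `π̄_w` (resp. `π_w`, with
`πᵢ = π̄ᵢ + 1`) given by products along reduced words, such that `{π̄_w : w ∈ Sₙ}` is an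
`F`-basis.  Let `α` be a composition of `n`, `w₀(α)` the minimal-length permutation with
descent set `D(α)` (the longest element of `S_{α^c}`) and `w₀(α^c)` the minimal-length
permutation with descent set `D(α^c) = [n-1] ∖ D(α)`.  Then the module
`P_α = Hₙ(0)·π̄_{w₀(α)}π_{w₀(α^c)}` has `F`-basis
`{π̄_w π_{w₀(α^c)} : w ∈ [w₀(α), w₁(α)]} = {π̄_w π_{w₀(α^c)} : D(w) = D(α)}`, and for
`D(w) = D(α)` and `i ∈ [n-1]` (written `i = j+1`, 0-based `j`):
`π̄ᵢ · π̄_w π_{w₀(α^c)} = -π̄_w π_{w₀(α^c)}` if `i ∈ D(w⁻¹)`; `= 0` if `i ∉ D(w⁻¹)` and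
`D(sᵢw) ⊄ D(α)`; and `= π̄_{sᵢw} π_{w₀(α^c)}` if `i ∉ D(w⁻¹)` and `D(sᵢw) ⊆ D(α)`. -/
theorem stmt_19 {F : Type*} [Field F] {A : Type*} [Ring A] [Algebra F A]
    (n : ℕ) (α : Composition n)
    (pib pi : ℕ → A)
    (hpi : ∀ i, pi i = pib i + 1)
    (hrel1 : ∀ i, 1 ≤ i → i < n → pib i * pib i = -pib i)
    (hrel2 : ∀ i j, 1 ≤ i → i < n → 1 ≤ j → j < n → (i + 1 < j ∨ j + 1 < i) →
      pib i * pib j = pib j * pib i)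
    (hrel3 : ∀ i, 1 ≤ i → i + 1 < n →
      pib i * pib (i + 1) * pib i = pib (i + 1) * pib i * pib (i + 1))
    (pibw piw : Equiv.Perm (Fin n) → A)
    (hpibw1 : pibw 1 = 1) (hpiw1 : piw 1 = 1)
    (hpibwrec : ∀ (j : ℕ) (h : j + 1 < n) (w : Equiv.Perm (Fin n)),
      invCount (Equiv.swap ⟨j, Nat.lt_of_succ_lt h⟩ ⟨j + 1, h⟩ * w) = invCount w + 1 →
      pibw (Equiv.swap ⟨j, Nat.lt_of_succ_lt h⟩ ⟨j + 1, h⟩ * w) = pib (j + 1) * pibw w)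
    (hpiwrec : ∀ (j : ℕ) (h : j + 1 < n) (w : Equiv.Perm (Fin n)),
      invCount (Equiv.swap ⟨j, Nat.lt_of_succ_lt h⟩ ⟨j + 1, h⟩ * w) = invCount w + 1 →
      piw (Equiv.swap ⟨j, Nat.lt_of_succ_lt h⟩ ⟨j + 1, h⟩ * w) = pi (j + 1) * piw w)
    (hbasis : LinearIndependent F pibw ∧ Submodule.span F (Set.range pibw) = ⊤)
    (w0a w0ac : Equiv.Perm (Fin n))
    (hw0a : DpermF w0a = Dset α ∧
      ∀ u : Equiv.Perm (Fin n), DpermF u = Dset α → invCount w0a ≤ invCount u)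
    (hw0ac : DpermF w0ac = Finset.Ioo 0 n \ Dset α ∧
      ∀ u : Equiv.Perm (Fin n), DpermF u = Finset.Ioo 0 n \ Dset α → invCount w0ac ≤ invCount u) :
    (LinearIndependent F
        (fun w : {w : Equiv.Perm (Fin n) // DpermF w = Dset α} =>
          pibw w.1 * piw w0ac) ∧
      Submodule.span F
          (Set.range (fun w : {w : Equiv.Perm (Fin n) // DpermF w = Dset α} =>
            pibw w.1 * piw w0ac))
        = Submodule.span F {a : A | ∃ b : A, a = b * (pibw w0a * piw w0ac)}) ∧
    (∀ w : Equiv.Perm (Fin n), DpermF w = Dset α → ∀ (j : ℕ) (h : j + 1 < n),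
      ((j + 1) ∈ DpermF w⁻¹ →
        pib (j + 1) * (pibw w * piw w0ac) = -(pibw w * piw w0ac)) ∧
      ((j + 1) ∉ DpermF w⁻¹ →
        ¬(DpermF (Equiv.swap ⟨j, Nat.lt_of_succ_lt h⟩ ⟨j + 1, h⟩ * w) ⊆ Dset α) →
        pib (j + 1) * (pibw w * piw w0ac) = 0) ∧
      ((j + 1) ∉ DpermF w⁻¹ →
        DpermF (Equiv.swap ⟨j, Nat.lt_of_succ_lt h⟩ ⟨j + 1, h⟩ * w) ⊆ Dset α →
        pib (j + 1) * (pibw w * piw w0ac) =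
          pibw (Equiv.swap ⟨j, Nat.lt_of_succ_lt h⟩ ⟨j + 1, h⟩ * w) * piw w0ac)) := by
  classical
  obtain ⟨hLI, hspan_top⟩ := hbasis
  -- basic setup
  have hTa : Dset α ⊆ Finset.Ioo 0 n := by
    intro m hm
    simp only [Dset, Finset.mem_image, Finset.mem_Ioo] at hm
    obtain ⟨i, ⟨hi0, hil⟩, rfl⟩ := hm
    have h1 : α.sizeUpTo 0 < α.sizeUpTo i :=
      lt_of_lt_of_le (α.sizeUpTo_strict_mono (by omega)) (α.monotone_sizeUpTo (by omega))
    have h2 : α.sizeUpTo i < α.sizeUpTo α.length :=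
      lt_of_lt_of_le (α.sizeUpTo_strict_mono hil) (α.monotone_sizeUpTo (by omega))
    rw [Finset.mem_Ioo]
    constructor
    · have h0 := α.sizeUpTo_zero
      omega
    · have h3 := α.sizeUpTo_length
      omega
  have hT'sub : (Finset.Ioo 0 n \ Dset α) ⊆ Finset.Ioo 0 n := Finset.sdiff_subset
  have hw0a_eq : w0a = wT (Dset α) hTa := eq_wT_of_min hTa hw0a.1 hw0a.2
  have hw0ac_eq : w0ac = wT (Finset.Ioo 0 n \ Dset α) hT'sub :=
    eq_wT_of_min hT'sub hw0ac.1 hw0ac.2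
  -- translated recursion hypotheses
  have hrec : ∀ (j : ℕ) (h : j + 1 < n) (w : Equiv.Perm (Fin n)),
      invCount (sw j h * w) = invCount w + 1 → pibw (sw j h * w) = pib (j + 1) * pibw w :=
    hpibwrec
  have hrecpi : ∀ (j : ℕ) (h : j + 1 < n) (w : Equiv.Perm (Fin n)),
      invCount (sw j h * w) = invCount w + 1 → piw (sw j h * w) = (pib (j + 1) + 1) * piw w := by
    intro j h w hc
    rw [← hpi]
    exact hpiwrec j h w hc
  have hsq : ∀ j : ℕ, j + 1 < n → pib (j+1) * pib (j+1) = -pib (j+1) :=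
    fun j h => hrel1 (j+1) (by omega) h
  -- descents of w0ac
  have hDw0ac : DpermF w0ac = Finset.Ioo 0 n \ Dset α := hw0ac.1
  have hw0ac_inv : w0ac⁻¹ = w0ac := by
    rw [hw0ac_eq]
    exact inv_eq_of_mul_eq_one_right (wT_invol hT'sub)
  -- ============ the action claims ============
  have hact1 : ∀ (w : Equiv.Perm (Fin n)), ∀ (j : ℕ) (h : j + 1 < n),
      (j + 1) ∈ DpermF w⁻¹ →
      pib (j + 1) * (pibw w * piw w0ac) = -(pibw w * piw w0ac) := by
    intro w j h hmem
    have hd := (mem_DpermF_inv_iff w j h).1 hmem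
    obtain ⟨hlen, heq⟩ := pibw_left_desc pib pibw hrec hd
    rw [heq]
    have : pib (j+1) * (pib (j+1) * pibw (sw j h * w) * piw w0ac)
        = (pib (j+1) * pib (j+1)) * (pibw (sw j h * w) * piw w0ac) := by
      noncomm_ring
    rw [this, hsq j h, neg_mul, mul_assoc]
  have hact3 : ∀ (w : Equiv.Perm (Fin n)), ∀ (j : ℕ) (h : j + 1 < n),
      (j + 1) ∉ DpermF w⁻¹ →
      pib (j + 1) * (pibw w * piw w0ac) = pibw (sw j h * w) * piw w0ac := by
    intro w j h hmem
    have hd : ¬ (w⁻¹ ⟨j+1, h⟩ < w⁻¹ ⟨j, Nat.lt_of_succ_lt h⟩) := by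
      rw [← mem_DpermF_inv_iff w j h]
      exact hmem
    obtain ⟨hlen, heq⟩ := pibw_left_asc pib pibw hrec hd
    rw [heq, mul_assoc]
  have hact2 : ∀ (w : Equiv.Perm (Fin n)), DpermF w = Dset α → ∀ (j : ℕ) (h : j + 1 < n),
      (j + 1) ∉ DpermF w⁻¹ →
      ¬(DpermF (sw j h * w) ⊆ Dset α) →
      pib (j + 1) * (pibw w * piw w0ac) = 0 := by
    intro w hw j h hmem hnsub
    rw [hact3 w j h hmem]
    set u := sw j h * w with hu
    obtain ⟨m, hmu, hmna⟩ := Finset.not_subset.1 hnsub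
    obtain ⟨hm0, hmn⟩ := DpermF_mem_bounds hmu
    obtain ⟨c, rfl⟩ : ∃ c, m = c + 1 := ⟨m - 1, by omega⟩
    have hrd : u ⟨c+1, hmn⟩ < u ⟨c, Nat.lt_of_succ_lt hmn⟩ := (mem_DpermF u c hmn).1 hmu
    have hfac : pibw u = pibw (u * sw c hmn) * pib (c+1) :=
      pibw_right_desc pib pibw hrec hpibw1 c hmn u hrd
    -- left descent of w0ac at c+1
    have hmwc : (c+1) ∈ DpermF w0ac := by
      rw [hDw0ac, Finset.mem_sdiff, Finset.mem_Ioo]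
      exact ⟨⟨by omega, hmn⟩, hmna⟩
    have hdwc : w0ac⁻¹ ⟨c+1, hmn⟩ < w0ac⁻¹ ⟨c, Nat.lt_of_succ_lt hmn⟩ := by
      rw [hw0ac_inv]
      exact (mem_DpermF w0ac c hmn).1 hmwc
    obtain ⟨hl2, heq2⟩ := pibw_left_desc (fun i => pib i + 1) piw hrecpi hdwc
    rw [hfac, heq2]
    have hzero : pib (c+1) * (pib (c+1) + 1) = 0 := by
      rw [mul_add, mul_one, hsq c hmn]
      exact neg_add_cancel _
    have : pibw (u * sw c hmn) * pib (c + 1) * ((pib (c + 1) + 1) * piw (sw c hmn * w0ac))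
        = pibw (u * sw c hmn) * ((pib (c+1) * (pib (c+1) + 1)) * piw (sw c hmn * w0ac)) := by
      noncomm_ring
    rw [this, hzero, zero_mul, mul_zero]
  -- lengths add for w * w0ac when w is in the descent class
  have hlen_wc : ∀ (w : Equiv.Perm (Fin n)), DpermF w = Dset α →
      invCount (w * w0ac) = invCount w + invCount w0ac := by
    intro w hw
    rw [hw0ac_eq]
    apply invCount_mul_wT_of_disj hT'sub
    intro p hp hpi2
    rw [mem_blkPairs] at hp
    rw [mem_invSet] at hpi2
    have hasc := chain_asc (T := Finset.Ioo 0 n \ Dset α) (hT_zero hT'sub)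
      (fun m hm => by
        rw [hw]
        rw [Finset.mem_sdiff] at hm
        exact hm.2) hp.1 hp.2
    exact absurd hpi2.2 (not_lt.2 (le_of_lt hasc))
  -- factorization through w0a for w in the descent class
  have hfact : ∀ (w : Equiv.Perm (Fin n)), DpermF w = Dset α →
      pibw w * piw w0ac = pibw (w * w0a) * (pibw w0a * piw w0ac) := by
    intro w hw
    have hsub : blkPairs (Dset α) n ⊆ invSet w := by
      intro p hp
      rw [mem_blkPairs] at hp
      rw [mem_invSet]
      refine ⟨hp.1, ?_⟩
      exact chain_desc (hT_zero hTa) (by rw [hw] : Dset α ⊆ DpermF w) hp.1 hp.2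
    have hadd : invCount (w * w0a) + invCount w0a = invCount w := by
      rw [hw0a_eq]
      exact invCount_mul_wT_of_sub hTa hsub
    have hmul : pibw ((w * w0a) * w0a) = pibw (w * w0a) * pibw w0a := by
      apply pibw_mul pib pibw hrec hpibw1
      have hww0 : (w * w0a) * w0a = w := by
        rw [mul_assoc, hw0a_eq, wT_invol hTa, mul_one]
      rw [hww0]
      omega
    have hww : (w * w0a) * w0a = w := by
      rw [mul_assoc, hw0a_eq, wT_invol hTa, mul_one]
    rw [hww] at hmul
    rw [hmul, mul_assoc]
  -- ============ linear independence ============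
  set ι := {w : Equiv.Perm (Fin n) // DpermF w = Dset α} with hι
  set vv : ι → A := fun w => pibw w.1 * piw w0ac with hvv
  have hsp : ⊤ ≤ Submodule.span F (Set.range pibw) := by rw [hspan_top]
  set B : Module.Basis (Equiv.Perm (Fin n)) F A := Module.Basis.mk hLI hsp with hB
  have hBapp : ∀ u, B u = pibw u := fun u => by rw [hB]; exact Module.Basis.mk_apply hLI hsp u
  have hcoord : ∀ t u : Equiv.Perm (Fin n),
      (B.coord t) (pibw u) = if u = t then 1 else 0 := by
    intro t u
    rw [← hBapp u]
    simp only [Module.Basis.coord_apply, Module.Basis.repr_self]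
    exact Finsupp.single_apply
  have hker : ∀ (t : Equiv.Perm (Fin n)) (k : ℕ), k ≤ invCount t →
      ∀ x ∈ Mlt F pibw k, (B.coord t) x = 0 := by
    intro t k hk x hx
    have : Mlt F pibw k ≤ LinearMap.ker (B.coord t) := by
      rw [Mlt, Submodule.span_le]
      rintro y ⟨u, hu, rfl⟩
      rw [SetLike.mem_coe, LinearMap.mem_ker, hcoord t u, if_neg]
      intro hc
      subst hc
      omega
    exact this hx
  -- triangular decomposition of the basis vectors
  have htri : ∀ i : ι, vv i - pibw (i.1 * w0ac) ∈ Mlt F pibw (invCount i.1 + invCount w0ac) :=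
    fun i => triangular pib pibw piw hrec hrecpi hpibw1 hpiw1 hsq i.1 w0ac (hlen_wc i.1 i.2)
  have hLIP : LinearIndependent F vv := by
    rw [linearIndependent_iff']
    intro s g hsum
    generalize hcard : s.card = K
    induction K using Nat.strong_induction_on generalizing s g with
    | _ K ih =>
      rcases Finset.eq_empty_or_nonempty s with rfl | hne
      · intro i hi
        exact absurd hi (Finset.notMem_empty i)
      · obtain ⟨istar, histar, hmax⟩ := Finset.exists_max_image s (fun i => invCount i.1) hne
        set φ := B.coord (istar.1 * w0ac) with hφ
        have hφv : ∀ i ∈ s, φ (vv i) = if i = istar then 1 else 0 := by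
          intro i hi
          have hdec : vv i = pibw (i.1 * w0ac) + (vv i - pibw (i.1 * w0ac)) := by abel
          rw [hdec, map_add]
          have h2 : φ (vv i - pibw (i.1 * w0ac)) = 0 := by
            apply hker _ (invCount i.1 + invCount w0ac) _ _ (htri i)
            rw [hlen_wc istar.1 istar.2]
            have := hmax i hi
            omega
          rw [h2, add_zero, hφ, hcoord]
          by_cases hc : i = istar
          · rw [if_pos (by rw [hc]), if_pos hc]
          · rw [if_neg (fun hcc => hc (Subtype.ext (mul_right_cancel hcc))), if_neg hc]
        have hg0 : g istar = 0 := by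
          have h0 : φ (∑ i ∈ s, g i • vv i) = 0 := by rw [hsum, map_zero]
          rw [map_sum] at h0
          have : ∀ i ∈ s, φ (g i • vv i) = if i = istar then g i else 0 := by
            intro i hi
            rw [map_smul, hφv i hi, smul_eq_mul]
            split_ifs with hc
            · rw [mul_one]
            · rw [mul_zero]
          rw [Finset.sum_congr rfl this, Finset.sum_ite_eq' s istar g, if_pos histar] at h0
          exact h0
        -- now erase istar and recurse
        have hsum' : ∑ i ∈ s.erase istar, g i • vv i = 0 := by
          have h5 := Finset.add_sum_erase s (fun i => g i • vv i) histar
          rw [hg0, zero_smul, zero_add, hsum] at h5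
          exact h5
        have hpos := Finset.card_pos.2 hne
        have hcard' : (s.erase istar).card < K := by
          rw [Finset.card_erase_of_mem histar]
          omega
        intro i hi
        by_cases hc : i = istar
        · rw [hc]; exact hg0
        · exact ih _ hcard' _ _ hsum' rfl i (Finset.mem_erase.2 ⟨hc, hi⟩)
  -- ============ span equality ============
  have hspan : Submodule.span F (Set.range vv)
      = Submodule.span F {a : A | ∃ b : A, a = b * (pibw w0a * piw w0ac)} := by
    apply le_antisymm
    · rw [Submodule.span_le]
      rintro a ⟨i, rfl⟩
      apply Submodule.subset_span
      exact ⟨pibw (i.1 * w0a), hfact i.1 i.2⟩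
    · rw [Submodule.span_le]
      rintro a ⟨b, rfl⟩
      -- step 1: multiplication by pib (j+1) preserves span of the vv's
      have hmulgen : ∀ (j : ℕ) (h : j + 1 < n) (y : A),
          y ∈ Submodule.span F (Set.range vv) →
          pib (j + 1) * y ∈ Submodule.span F (Set.range vv) := by
        intro j h y hy
        refine Submodule.span_induction ?_ ?_ ?_ ?_ hy
        · rintro z ⟨i, rfl⟩
          have hzi : vv i = pibw i.1 * piw w0ac := rfl
          by_cases hd : (j + 1) ∈ DpermF i.1⁻¹
          · rw [hzi, hact1 i.1 j h hd, ← hzi]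
            exact Submodule.neg_mem _ (Submodule.subset_span ⟨i, rfl⟩)
          · by_cases hsub : DpermF (sw j h * i.1) ⊆ Dset α
            · rw [hzi, hact3 i.1 j h hd]
              have hDeq : DpermF (sw j h * i.1) = Dset α := by
                apply le_antisymm hsub
                have h6 : DpermF i.1 ⊆ DpermF (sw j h * i.1) := by
                  apply DpermF_mono
                  rw [← mem_DpermF_inv_iff i.1 j h]
                  exact hd
                rw [i.2] at h6
                exact h6
              exact Submodule.subset_span ⟨⟨sw j h * i.1, hDeq⟩, rfl⟩
            · rw [hzi, hact2 i.1 i.2 j h hd hsub]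
              exact Submodule.zero_mem _
        · rw [mul_zero]; exact Submodule.zero_mem _
        · intro z1 z2 _ _ h1 h2
          rw [mul_add]; exact Submodule.add_mem _ h1 h2
        · intro c z _ h1
          rw [Algebra.mul_smul_comm]; exact Submodule.smul_mem _ c h1
      -- step 2: pibw u * X ∈ span for all u
      have hXmem : pibw w0a * piw w0ac ∈ Submodule.span F (Set.range vv) :=
        Submodule.subset_span ⟨⟨w0a, hw0a.1⟩, rfl⟩
      have hstep2 : ∀ u : Equiv.Perm (Fin n),
          pibw u * (pibw w0a * piw w0ac) ∈ Submodule.span F (Set.range vv) := by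
        intro u
        generalize hm : invCount u = m
        induction m using Nat.strong_induction_on generalizing u with
        | _ m ih2 =>
          by_cases h1 : u = 1
          · subst h1
            rw [hpibw1, one_mul]
            exact hXmem
          · obtain ⟨j, h, hd⟩ := exists_left_descent u h1
            have huu : u = sw j h * (sw j h * u) := by
              rw [← mul_assoc, sw_mul_self, one_mul]
            have hstep : invCount (sw j h * (sw j h * u)) = invCount (sw j h * u) + 1 := by
              rw [← huu]; omega
            have heq : pibw u = pib (j + 1) * pibw (sw j h * u) := by
              conv_lhs => rw [huu]
              exact hrec j h _ hstep
            rw [heq, mul_assoc]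
            exact hmulgen j h _ (ih2 (invCount (sw j h * u)) (by omega) _ rfl)
      -- step 3: all of A
      have hb : b ∈ Submodule.span F (Set.range pibw) := by
        rw [hspan_top]; exact Submodule.mem_top
      refine Submodule.span_induction ?_ ?_ ?_ ?_ hb
      · rintro z ⟨u, rfl⟩
        exact hstep2 u
      · rw [zero_mul]; exact Submodule.zero_mem _
      · intro z1 z2 _ _ h1 h2
        rw [add_mul]; exact Submodule.add_mem _ h1 h2
      · intro c z _ h1
        rw [smul_mul_assoc]; exact Submodule.smul_mem _ c h1
  refine ⟨⟨hLIP, hspan⟩, ?_⟩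
  intro w hw j h
  exact ⟨hact1 w j h, hact2 w hw j h, fun hd _ => hact3 w j h hd⟩
end
end
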